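/- arXiv:2101.05713 — 7 statements merged into one kernel-verified Lean document; each statement's English description precedes it below -/
import Mathlib

section
/- For all integers m ≥ 1, r ≥ 0, k ≥ 0, and n ≥ 1, the power sum S_k^{m,r}(n) = Σ_{ℓ=0}^{n-1} (ℓm + r)^k satisfies, as an identity of rational numbers, S_k^{m,r}(n) = Σ_{t=1}^{k+1} c_{k,t}^{m,r} n^t, where c_{k,t}^{m,r} = (m^k/(k+1)) · C(k+1, t) · Σ_{j=0}^{k+1-t} Σ_{i=0}^{j} ((-1)^i/(j+1)) · C(j, i) · (i + r/m)^{k+1-t}. -/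
open Finset

/-- `Gaux j s c = ∑_{i=0}^{j} (-1)^i C(j,i) (i+c)^s`. -/
def Gaux (j s : ℕ) (c : ℚ) : ℚ :=
  ∑ i ∈ range (j + 1), (-1 : ℚ) ^ i * (j.choose i : ℚ) * ((i : ℚ) + c) ^ s

lemma Gaux_zero (s : ℕ) (c : ℚ) : Gaux 0 s c = c ^ s := by
  simp [Gaux]

lemma Gaux_one (s : ℕ) (c : ℚ) : Gaux 1 s c = c ^ s - (c + 1) ^ s := by
  simp [Gaux, Finset.sum_range_succ]
  ring_nf

/-- Pascal recurrence. -/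
lemma Gaux_succ (j s : ℕ) (c : ℚ) :
    Gaux (j + 1) s c = Gaux j s c - Gaux j s (c + 1) := by
  have h0 : Gaux (j+1) s c
      = (∑ i ∈ range (j+1),
          (-1:ℚ)^(i+1) * (((j+1).choose (i+1) : ℕ) : ℚ) * (((i+1 : ℕ) : ℚ) + c) ^ s)
        + (-1:ℚ)^0 * (((j+1).choose 0 : ℕ) : ℚ) * (((0:ℕ):ℚ) + c) ^ s := by
    unfold Gaux
    exact Finset.sum_range_succ' _ (j+1)
  have h1 : ∀ i ∈ range (j+1),
      (-1:ℚ)^(i+1) * (((j+1).choose (i+1) : ℕ) : ℚ) * (((i+1 : ℕ) : ℚ) + c) ^ s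
        = -((-1:ℚ)^i * ((j.choose i : ℕ) : ℚ) * (((i:ℕ):ℚ) + (c+1)) ^ s)
          + (-1:ℚ)^(i+1) * ((j.choose (i+1) : ℕ) : ℚ) * (((i+1 : ℕ):ℚ) + c) ^ s := by
    intro i _
    rw [Nat.choose_succ_succ]
    push_cast
    ring
  rw [h0, Finset.sum_congr rfl h1, Finset.sum_add_distrib, Finset.sum_neg_distrib]
  have h2 : ∑ i ∈ range (j+1),
      (-1:ℚ)^(i+1) * ((j.choose (i+1) : ℕ) : ℚ) * (((i+1 : ℕ):ℚ) + c) ^ s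
      = Gaux j s c + ((-1:ℚ)^(j+1) * ((j.choose (j+1) : ℕ) : ℚ) * (((j+1 : ℕ):ℚ) + c) ^ s)
        - (-1:ℚ)^0 * ((j.choose 0 : ℕ) : ℚ) * (((0:ℕ):ℚ) + c) ^ s := by
    have hA := Finset.sum_range_succ'
      (fun i => (-1:ℚ)^i * ((j.choose i : ℕ) : ℚ) * (((i:ℕ):ℚ) + c) ^ s) (j+1)
    have hB := Finset.sum_range_succ
      (fun i => (-1:ℚ)^i * ((j.choose i : ℕ) : ℚ) * (((i:ℕ):ℚ) + c) ^ s) (j+1)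
    have hAB := hA.symm.trans hB
    unfold Gaux
    linarith [hAB]
  rw [h2]
  simp only [Nat.choose_succ_self, Nat.cast_zero, Nat.choose_zero_right, Nat.cast_one]
  unfold Gaux
  ring

/-- extracting one factor of the base. -/
lemma Gaux_pow_succ (j s : ℕ) (c : ℚ) :
    Gaux (j + 1) (s + 1) c = c * Gaux (j + 1) s c - ((j:ℚ) + 1) * Gaux j s (c + 1) := by
  have key : ∀ i : ℕ, (((i+1:ℕ)):ℚ) * (((j+1).choose (i+1) : ℕ) : ℚ)
      = ((j:ℚ)+1) * ((j.choose i : ℕ) : ℚ) := by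
    intro i
    have h : (j+1) * j.choose i = (j+1).choose (i+1) * (i+1) := Nat.add_one_mul_choose_eq j i
    calc (((i+1:ℕ)):ℚ) * (((j+1).choose (i+1) : ℕ) : ℚ)
        = (((j+1).choose (i+1) * (i+1) : ℕ) : ℚ) := by push_cast; ring
      _ = (((j+1) * j.choose i : ℕ) : ℚ) := by rw [← h]
      _ = ((j:ℚ)+1) * ((j.choose i : ℕ) : ℚ) := by push_cast; ring
  have h1 : ∀ i ∈ range (j+2),
      (-1:ℚ)^i * (((j+1).choose i : ℕ) : ℚ) * ((i:ℚ) + c) ^ (s+1)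
        = c * ((-1:ℚ)^i * (((j+1).choose i : ℕ) : ℚ) * ((i:ℚ) + c) ^ s)
          + (-1:ℚ)^i * ((i:ℚ) * (((j+1).choose i : ℕ) : ℚ)) * ((i:ℚ) + c) ^ s := by
    intro i _
    ring
  have h2 : ∑ i ∈ range (j+2),
      (-1:ℚ)^i * ((i:ℚ) * (((j+1).choose i : ℕ) : ℚ)) * ((i:ℚ) + c) ^ s
      = -(((j:ℚ)+1) * Gaux j s (c+1)) := by
    rw [Finset.sum_range_succ'
      (fun i => (-1:ℚ)^i * ((i:ℚ) * (((j+1).choose i : ℕ) : ℚ)) * ((i:ℚ) + c) ^ s) (j+1)]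
    have h3 : ∀ i ∈ range (j+1),
        (-1:ℚ)^(i+1) * ((((i+1:ℕ)):ℚ) * (((j+1).choose (i+1) : ℕ) : ℚ)) * ((((i+1:ℕ)):ℚ) + c) ^ s
          = -(((j:ℚ)+1) * ((-1:ℚ)^i * ((j.choose i : ℕ) : ℚ) * (((i:ℕ):ℚ) + (c+1)) ^ s)) := by
      intro i _
      have hk := key i
      push_cast at hk ⊢
      linear_combination ((-1:ℚ)^(i+1) * ((i:ℚ) + (1 + c)) ^ s) * hk
    rw [Finset.sum_congr rfl h3, Finset.sum_neg_distrib, ← Finset.mul_sum]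
    unfold Gaux
    push_cast
    ring
  unfold Gaux
  rw [Finset.sum_congr rfl h1, Finset.sum_add_distrib, ← Finset.mul_sum]
  rw [show ∀ a b d : ℚ, a + b = a - d ↔ b = -d from by intro a b d; constructor <;> intro <;> linarith]
  exact h2

lemma Gaux_eq_zero (s : ℕ) : ∀ j, s < j → ∀ c : ℚ, Gaux j s c = 0 := by
  induction s with
  | zero =>
    intro j hj c
    obtain ⟨j', rfl⟩ : ∃ j', j = j' + 1 := ⟨j - 1, by omega⟩
    have h := Int.alternating_sum_range_choose_of_ne (n := j' + 1) (by omega)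
    unfold Gaux
    have hc : (∑ i ∈ range (j'+1+1), (-1:ℚ)^i * (((j'+1).choose i : ℕ) : ℚ) * ((i:ℚ) + c) ^ 0)
        = ((∑ i ∈ range (j'+1+1), (-1:ℤ)^i * (((j'+1).choose i : ℕ) : ℤ) : ℤ) : ℚ) := by
      push_cast
      apply Finset.sum_congr rfl
      intros
      ring
    rw [hc, h]
    simp
  | succ s ih =>
    intro j hj c
    obtain ⟨j', rfl⟩ : ∃ j', j = j' + 1 := ⟨j - 1, by omega⟩
    rw [Gaux_pow_succ, ih (j'+1) (by omega) c, ih j' (by omega) (c+1)]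
    ring

lemma sum_Gaux (s : ℕ) (J : ℕ) (x : ℚ) :
    ∑ j ∈ range (J + 1), Gaux j s (x + 1) = x ^ s - Gaux (J + 1) s x := by
  induction J with
  | zero => simp [Gaux_zero, Gaux_one]
  | succ J ih =>
    rw [Finset.sum_range_succ, ih, Gaux_succ (J+1) s x]
    ring

lemma T_sum (K : ℕ) (hK : 1 ≤ K) (x : ℚ) :
    ∑ j ∈ range K, 1 / ((j:ℚ) + 1) * Gaux (j + 1) K x = -(K:ℚ) * x ^ (K - 1) := by
  induction K, hK using Nat.le_induction generalizing x with
  | base =>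
    simp [Gaux_one]
  | succ K hK ih =>
    have h1 : ∀ j ∈ range (K+1),
        1 / ((j:ℚ) + 1) * Gaux (j + 1) (K+1) x
          = x * (1 / ((j:ℚ) + 1) * Gaux (j + 1) K x) - Gaux j K (x + 1) := by
      intro j _
      rw [Gaux_pow_succ]
      have hj : ((j:ℚ) + 1) ≠ 0 := by positivity
      field_simp
    rw [Finset.sum_congr rfl h1, Finset.sum_sub_distrib, ← Finset.mul_sum,
      Finset.sum_range_succ, ih x, Gaux_eq_zero K (K+1) (by omega) x,
      sum_Gaux K K x, Gaux_eq_zero K (K+1) (by omega) x]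
    have hx : x * x ^ (K - 1) = x ^ K := by
      rw [← pow_succ']
      congr 1
      omega
    push_cast
    linear_combination (-(K:ℚ)) * hx

lemma telescope (K : ℕ) (hK : 1 ≤ K) (q : ℚ) (n : ℕ) :
    ∑ j ∈ range (K + 1), 1 / ((j:ℚ) + 1) * (Gaux j K (q + n) - Gaux j K q)
      = (K:ℚ) * ∑ ℓ ∈ range n, (q + ℓ) ^ (K - 1) := by
  induction n with
  | zero => simp
  | succ n ih =>
    have hcast : (q + ((n+1 : ℕ):ℚ)) = (q + (n:ℕ)) + 1 := by push_cast; ring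
    have h1 : ∀ j ∈ range (K+1),
        1 / ((j:ℚ) + 1) * (Gaux j K (q + ((n+1:ℕ):ℚ)) - Gaux j K q)
          = 1 / ((j:ℚ) + 1) * (Gaux j K (q + (n:ℕ)) - Gaux j K q)
            + (-(1 / ((j:ℚ) + 1) * Gaux (j+1) K (q + (n:ℕ)))) := by
      intro j _
      rw [hcast]
      have h2 : Gaux j K ((q + (n:ℕ)) + 1) = Gaux j K (q + (n:ℕ)) - Gaux (j+1) K (q + (n:ℕ)) := by
        have := Gaux_succ j K (q + (n:ℕ))
        linarith
      rw [h2]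
      ring
    rw [Finset.sum_congr rfl h1, Finset.sum_add_distrib, ih, Finset.sum_neg_distrib,
      Finset.sum_range_succ, T_sum K hK (q + (n:ℕ)), Gaux_eq_zero K (K+1) (by omega) (q + (n:ℕ)),
      Finset.sum_range_succ]
    ring

lemma binom_tail (K : ℕ) (x y : ℚ) :
    ∑ t ∈ Icc 1 K, (K.choose t : ℚ) * y ^ t * x ^ (K - t) = (x + y) ^ K - x ^ K := by
  have h := Commute.add_pow (Commute.all y x) K
  rw [Finset.sum_range_succ'] at h
  rw [← Finset.Ico_add_one_right_eq_Icc, Finset.sum_Ico_eq_sum_range]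
  have hyx : (x + y) ^ K = (y + x) ^ K := by ring
  rw [hyx, h]
  simp only [Nat.choose_zero_right, pow_zero, Nat.sub_zero, Nat.cast_one, one_mul, mul_one]
  rw [add_sub_cancel_right]
  apply Finset.sum_congr rfl
  intro t _
  rw [add_comm 1 t]
  ring

/-- swap sums, apply binomial. -/
lemma Gaux_swap (j K : ℕ) (q y : ℚ) :
    ∑ t ∈ Icc 1 K, ((K.choose t : ℚ) * y ^ t) * Gaux j (K - t) q
      = Gaux j K (q + y) - Gaux j K q := by
  have h1 : ∀ t ∈ Icc 1 K, ((K.choose t : ℚ) * y ^ t) * Gaux j (K - t) q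
      = ∑ i ∈ range (j+1),
          ((-1:ℚ)^i * (j.choose i : ℚ)) * ((K.choose t : ℚ) * y ^ t * ((i:ℚ) + q) ^ (K - t)) := by
    intro t _
    unfold Gaux
    rw [Finset.mul_sum]
    apply Finset.sum_congr rfl
    intro i _
    ring
  rw [Finset.sum_congr rfl h1, Finset.sum_comm]
  have h2 : ∀ i ∈ range (j+1),
      ∑ t ∈ Icc 1 K, ((-1:ℚ)^i * (j.choose i : ℚ)) * ((K.choose t : ℚ) * y ^ t * ((i:ℚ) + q) ^ (K - t))
        = ((-1:ℚ)^i * (j.choose i : ℚ)) * ((((i:ℚ) + q) + y) ^ K - ((i:ℚ) + q) ^ K) := by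
    intro i _
    rw [← Finset.mul_sum, binom_tail]
  rw [Finset.sum_congr rfl h2]
  unfold Gaux
  rw [← Finset.sum_sub_distrib]
  apply Finset.sum_congr rfl
  intro i _
  ring

/-- `S_k^{m,r}(n) = Σ_{t=1}^{k+1} c_{k,t}^{m,r} n^t` with
`c_{k,t}^{m,r} = (m^k/(k+1)) C(k+1,t) Σ_{j=0}^{k+1-t} Σ_{i=0}^{j} ((-1)^i/(j+1)) C(j,i) (i + r/m)^{k+1-t}`. -/
theorem power_sum_coeff_formula (m r k n : ℕ) (hm : 1 ≤ m) (hn : 1 ≤ n) :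
    ∑ ℓ ∈ Finset.range n, ((ℓ : ℚ) * m + r) ^ k =
      ∑ t ∈ Finset.Icc 1 (k + 1),
        ((m : ℚ) ^ k / (k + 1) * (Nat.choose (k + 1) t : ℚ) *
          ∑ j ∈ Finset.range (k + 1 - t + 1), ∑ i ∈ Finset.range (j + 1),
            (-1 : ℚ) ^ i / (j + 1) * (Nat.choose j i : ℚ) *
              ((i : ℚ) + (r : ℚ) / m) ^ (k + 1 - t)) * (n : ℚ) ^ t := by
  have hm0 : (m:ℚ) ≠ 0 := Nat.cast_ne_zero.mpr (by omega)
  set q : ℚ := (r:ℚ)/m with hq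
  symm
  calc
    ∑ t ∈ Finset.Icc 1 (k + 1),
        ((m : ℚ) ^ k / (k + 1) * (Nat.choose (k + 1) t : ℚ) *
          ∑ j ∈ Finset.range (k + 1 - t + 1), ∑ i ∈ Finset.range (j + 1),
            (-1 : ℚ) ^ i / (j + 1) * (Nat.choose j i : ℚ) *
              ((i : ℚ) + q) ^ (k + 1 - t)) * (n : ℚ) ^ t
      = ∑ t ∈ Icc 1 (k+1), ∑ j ∈ range (k + 2),
            (m:ℚ)^k / ((k:ℚ)+1)
              * (1 / ((j:ℚ)+1) * (((k+1).choose t : ℚ) * (n:ℚ)^t * Gaux j (k+1-t) q)) := by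
        apply Finset.sum_congr rfl
        intro t ht
        have hsub : range (k + 1 - t + 1) ⊆ range (k + 2) := by
          apply Finset.range_subset_range.mpr; omega
        have hinner : ∀ j : ℕ,
            (∑ i ∈ Finset.range (j + 1),
              (-1 : ℚ) ^ i / (j + 1) * (Nat.choose j i : ℚ) * ((i : ℚ) + q) ^ (k + 1 - t))
            = 1 / ((j:ℚ)+1) * Gaux j (k+1-t) q := by
          intro j
          unfold Gaux
          rw [Finset.mul_sum]
          apply Finset.sum_congr rfl
          intro i _
          ring
        rw [Finset.sum_congr rfl (fun j _ => hinner j)]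
        rw [Finset.sum_subset hsub (by
          intro j hj hnot
          simp only [Finset.mem_range] at hj hnot
          rw [Gaux_eq_zero (k+1-t) j (by omega) q, mul_zero])]
        rw [Finset.mul_sum, Finset.sum_mul]
        apply Finset.sum_congr rfl
        intro j _
        push_cast
        ring
    _ = ∑ j ∈ range (k + 2),
          (m:ℚ)^k / ((k:ℚ)+1)
            * (1 / ((j:ℚ)+1) * (Gaux j (k+1) (q + n) - Gaux j (k+1) q)) := by
        rw [Finset.sum_comm]
        apply Finset.sum_congr rfl
        intro j _
        rw [← Finset.mul_sum, ← Finset.mul_sum]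
        congr 1
        rw [← Gaux_swap j (k+1) q (n:ℚ)]
    _ = (m:ℚ)^k / ((k:ℚ)+1) * (((k+1 : ℕ):ℚ) * ∑ ℓ ∈ range n, (q + ℓ) ^ k) := by
        rw [← Finset.mul_sum]
        congr 1
        have := telescope (k+1) (by omega) q n
        simp only [Nat.add_sub_cancel] at this
        rw [this]
    _ = (m:ℚ)^k * ∑ ℓ ∈ range n, (q + ℓ) ^ k := by
        push_cast
        have hk1 : ((k:ℚ)+1) ≠ 0 := by positivity
        field_simp
    _ = ∑ ℓ ∈ Finset.range n, ((ℓ : ℚ) * m + r) ^ k := by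
        rw [Finset.mul_sum]
        apply Finset.sum_congr rfl
        intro ℓ _
        rw [← mul_pow, hq]
        congr 1
        field_simp
        ring
end

section
/- For all integers m ≥ 1, r ≥ 0, k ≥ 0, and n ≥ 1, the power sum S_k^{m,r}(n) = Σ_{ℓ=0}^{n-1} (ℓm + r)^k satisfies S_k^{m,r}(n) = Σ_{t=1}^{k+1} c_{k,t}^{m,r} n^t, where c_{k,t}^{m,r} = (m^{t-1}/(k+1)) · C(k+1, t) · Σ_{j=0}^{k+1-t} (-1)^j · (m^j j!/(j+1)) · W_{m,r}(k+1-t, j), and W_{m,r}(s,j) = (1/(m^j j!)) Σ_{i=0}^{j} (-1)^{j-i} C(j,i) (mi + r)^s are the r-Whitney numbers of the second kind. -/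
/-- The `r`-Whitney numbers of the second kind
`W_{m,r}(s,j) = (1/(m^j j!)) Σ_{i=0}^{j} (-1)^{j-i} C(j,i) (mi + r)^s`. -/
def rWhitney (m r s j : ℕ) : ℚ :=
  (1 / ((m : ℚ) ^ j * (Nat.factorial j : ℚ))) *
    ∑ i ∈ Finset.range (j + 1),
      (-1 : ℚ) ^ (j - i) * (Nat.choose j i : ℚ) * ((m : ℚ) * i + r) ^ s

def psD (a y : ℚ) (e j : ℕ) : ℚ :=
  ∑ i ∈ Finset.range (j+1), (-1:ℚ)^i * (Nat.choose j i : ℚ) * (y + a*i)^e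

def psF (a y : ℚ) (s : ℕ) : ℚ :=
  ∑ j ∈ Finset.range (s+1), psD a y s j / ((j:ℚ)+1)

lemma psD_pascal (a y : ℚ) (e j : ℕ) :
    psD a y e (j+1) = psD a y e j - psD a (y+a) e j := by
  have key : ∀ f : ℕ → ℚ,
      ∑ i ∈ Finset.range (j+2), (-1:ℚ)^i * ((Nat.choose (j+1) i : ℕ) : ℚ) * f i
      = ∑ i ∈ Finset.range (j+1), (-1:ℚ)^i * ((Nat.choose j i : ℕ) : ℚ) * f i
        - ∑ i ∈ Finset.range (j+1), (-1:ℚ)^i * ((Nat.choose j i : ℕ) : ℚ) * f (i+1) := by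
    intro f
    rw [Finset.sum_range_succ']
    have hS2 : ∑ i ∈ Finset.range (j+1), (-1:ℚ)^(i+1) * ((Nat.choose j (i+1) : ℕ) : ℚ) * f (i+1)
        = (∑ i ∈ Finset.range (j+1), (-1:ℚ)^i * ((Nat.choose j i : ℕ) : ℚ) * f i) - f 0 := by
      rw [Finset.sum_range_succ, Nat.choose_succ_self,
        Finset.sum_range_succ' (fun i => (-1:ℚ)^i * ((Nat.choose j i : ℕ) : ℚ) * f i) j]
      simp
    have hsplit : ∑ i ∈ Finset.range (j+1), (-1:ℚ)^(i+1) * ((Nat.choose (j+1) (i+1) : ℕ) : ℚ) * f (i+1)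
        = (∑ i ∈ Finset.range (j+1), (-1:ℚ)^(i+1) * ((Nat.choose j i : ℕ) : ℚ) * f (i+1))
          + ∑ i ∈ Finset.range (j+1), (-1:ℚ)^(i+1) * ((Nat.choose j (i+1) : ℕ) : ℚ) * f (i+1) := by
      rw [← Finset.sum_add_distrib]
      refine Finset.sum_congr rfl fun i _ => ?_
      rw [Nat.choose_succ_succ]
      push_cast; ring
    rw [hsplit, hS2]
    have : ∑ i ∈ Finset.range (j+1), (-1:ℚ)^(i+1) * ((Nat.choose j i : ℕ) : ℚ) * f (i+1)
        = - ∑ i ∈ Finset.range (j+1), (-1:ℚ)^i * ((Nat.choose j i : ℕ) : ℚ) * f (i+1) := by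
      rw [← Finset.sum_neg_distrib]
      refine Finset.sum_congr rfl fun i _ => by ring
    rw [this]; simp; ring
  have h1 : psD a (y+a) e j
      = ∑ i ∈ Finset.range (j+1), (-1:ℚ)^i * ((Nat.choose j i : ℕ) : ℚ) * ((fun i => (y + a*(i:ℕ))^e) (i+1)) := by
    unfold psD
    refine Finset.sum_congr rfl fun i _ => ?_
    push_cast; ring_nf
  rw [h1]
  unfold psD
  exact key (fun i => (y + a*(i:ℕ))^e)

lemma psD_rec (a y : ℚ) (e j : ℕ) :
    psD a y (e+1) (j+1) = y * psD a y e (j+1) - a*((j:ℚ)+1) * psD a (y+a) e j := by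
  have hS : ∑ i ∈ Finset.range (j+2), ((-1:ℚ)^i * (Nat.choose (j+1) i : ℚ) * ((i:ℚ) * (y + a*(i:ℕ))^e))
      = -(((j:ℚ)+1) * psD a (y+a) e j) := by
    rw [Finset.sum_range_succ']
    unfold psD
    rw [Finset.mul_sum, ← Finset.sum_neg_distrib]
    rw [show (-1:ℚ)^0 * ((Nat.choose (j+1) 0 : ℕ) : ℚ) * (((0:ℕ):ℚ) * (y + a*((0:ℕ):ℚ))^e) = 0 by simp, add_zero]
    refine Finset.sum_congr rfl fun i _ => ?_
    have hc : ((j:ℚ)+1) * ((Nat.choose j i : ℕ) : ℚ) = ((Nat.choose (j+1) (i+1) : ℕ) : ℚ) * ((i:ℚ)+1) := by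
      exact_mod_cast congrArg (Nat.cast (R := ℚ)) (Nat.add_one_mul_choose_eq j i)
    have hP : (y + a*(((i:ℚ))+1))^e = (y + a + a*(i:ℚ))^e := by ring_nf
    push_cast
    linear_combination ((-1:ℚ)^i * (y + a + a*(i:ℚ))^e) * hc - ((j:ℚ)+1) * ((-1:ℚ)^i * ((Nat.choose j i : ℕ) : ℚ)) * hP
  have expand : psD a y (e+1) (j+1) = y * psD a y e (j+1)
      + a * ∑ i ∈ Finset.range (j+2), ((-1:ℚ)^i * (Nat.choose (j+1) i : ℚ) * ((i:ℚ) * (y + a*(i:ℕ))^e)) := by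
    unfold psD
    rw [Finset.mul_sum, Finset.mul_sum, ← Finset.sum_add_distrib]
    refine Finset.sum_congr rfl fun i _ => by push_cast; ring
  rw [expand, hS]; ring

lemma psD_vanish (a y : ℚ) {e j : ℕ} (h : e < j) : psD a y e j = 0 := by
  induction e generalizing y j with
  | zero =>
    obtain ⟨j', rfl⟩ : ∃ j', j = j'+1 := ⟨j-1, by omega⟩
    rw [psD_pascal]
    have : psD a y 0 j' = psD a (y+a) 0 j' := by
      unfold psD; exact Finset.sum_congr rfl fun i _ => by simp
    rw [this, sub_self]
  | succ e ih =>
    obtain ⟨j', rfl⟩ : ∃ j', j = j'+1 := ⟨j-1, by omega⟩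
    rw [psD_rec, ih y (by omega), ih (y+a) (by omega)]; ring

lemma psD_sum (a y : ℚ) {e N : ℕ} (h : e ≤ N) :
    ∑ j ∈ Finset.range (N+1), psD a y e j = (y - a)^e := by
  have swap : ∑ j ∈ Finset.range (N+1), psD a y e j
      = ∑ i ∈ Finset.range (N+1), (-1:ℚ)^i * ((Nat.choose (N+1) (i+1) : ℕ) : ℚ) * (y + a*i)^e := by
    unfold psD
    rw [show (∑ j ∈ Finset.range (N+1), ∑ i ∈ Finset.range (j+1),
          (-1:ℚ)^i * ((Nat.choose j i : ℕ) : ℚ) * (y + a*i)^e)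
        = ∑ j ∈ Finset.range (N+1), ∑ i ∈ Finset.range (N+1),
            if i ≤ j then (-1:ℚ)^i * ((Nat.choose j i : ℕ) : ℚ) * (y + a*i)^e else 0 from
      Finset.sum_congr rfl fun j hj => by
        rw [Finset.sum_ite, Finset.sum_const_zero, add_zero]
        refine Finset.sum_congr ?_ fun _ _ => rfl
        ext i
        simp only [Finset.mem_filter, Finset.mem_range] at *
        omega]
    rw [Finset.sum_comm]
    refine Finset.sum_congr rfl fun i hi => ?_
    rw [Finset.sum_ite, Finset.sum_const_zero, add_zero]
    have hfil : (Finset.range (N+1)).filter (fun j => i ≤ j) = Finset.Icc i N := by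
      ext j
      simp only [Finset.mem_filter, Finset.mem_range, Finset.mem_Icc]
      omega
    rw [hfil]
    have hhs : ∑ j ∈ Finset.Icc i N, ((Nat.choose j i : ℕ) : ℚ)
        = ((Nat.choose (N+1) (i+1) : ℕ) : ℚ) := by
      rw [← Nat.sum_Icc_choose N i]; push_cast; rfl
    calc ∑ j ∈ Finset.Icc i N, (-1:ℚ)^i * ((Nat.choose j i : ℕ) : ℚ) * (y + a*i)^e
        = ((-1:ℚ)^i * (y + a*i)^e) * ∑ j ∈ Finset.Icc i N, ((Nat.choose j i : ℕ) : ℚ) := by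
          rw [Finset.mul_sum]; exact Finset.sum_congr rfl fun _ _ => by ring
      _ = _ := by rw [hhs]; ring
  have hvan : psD a (y-a) e (N+1) = 0 := psD_vanish a (y-a) (by omega)
  unfold psD at hvan
  rw [Finset.sum_range_succ'] at hvan
  have hneg : ∑ i ∈ Finset.range (N+1),
      (-1:ℚ)^(i+1) * ((Nat.choose (N+1) (i+1) : ℕ) : ℚ) * ((y-a) + a*((i:ℚ)+1))^e
      = - ∑ i ∈ Finset.range (N+1), (-1:ℚ)^i * ((Nat.choose (N+1) (i+1) : ℕ) : ℚ) * (y + a*i)^e := by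
    rw [← Finset.sum_neg_distrib]
    refine Finset.sum_congr rfl fun i _ => ?_
    have hb : ((y-a) + a*((i:ℚ)+1))^e = (y + a*(i:ℚ))^e := by ring_nf
    rw [hb]; ring
  rw [swap]
  push_cast at hvan
  rw [hneg] at hvan
  have h0 : (-1:ℚ)^0 * ((Nat.choose (N+1) 0 : ℕ) : ℚ) * ((y-a) + a*((0:ℕ):ℚ))^e = (y-a)^e := by
    simp
  push_cast at h0
  linarith [hvan, h0]

lemma psL5 (a : ℚ) : ∀ (s : ℕ) (y : ℚ),
    ∑ j ∈ Finset.range (s+1), psD a y (s+1) (j+1) / ((j:ℚ)+1) = -(((s:ℚ)+1) * a * y^s) := by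
  intro s
  induction s with
  | zero =>
    intro y
    rw [Finset.sum_range_one]
    unfold psD
    simp [Finset.sum_range_succ]
  | succ s ih =>
    intro y
    have step : ∀ j ∈ Finset.range (s+2), psD a y (s+1+1) (j+1) / ((j:ℚ)+1)
        = y * (psD a y (s+1) (j+1) / ((j:ℚ)+1)) - a * psD a (y+a) (s+1) j := by
      intro j _
      rw [psD_rec]
      have : ((j:ℚ)+1) ≠ 0 := by positivity
      field_simp
    rw [Finset.sum_congr rfl step, Finset.sum_sub_distrib, ← Finset.mul_sum, ← Finset.mul_sum]
    have h1 : ∑ j ∈ Finset.range (s+2), psD a y (s+1) (j+1) / ((j:ℚ)+1)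
        = -(((s:ℚ)+1) * a * y^s) := by
      rw [Finset.sum_range_succ, psD_vanish a y (by omega), ih y]
      push_cast; ring
    have h2 : ∑ j ∈ Finset.range (s+2), psD a (y+a) (s+1) j = y^(s+1) := by
      rw [psD_sum a (y+a) (le_refl (s+1))]
      ring_nf
    rw [h1, h2]
    push_cast; ring

lemma psF_step (a y : ℚ) (s : ℕ) :
    psF a (y+a) (s+1) - psF a y (s+1) = ((s:ℚ)+1) * a * y^s := by
  unfold psF
  rw [← Finset.sum_sub_distrib]
  have : ∀ j ∈ Finset.range (s+2), psD a (y+a) (s+1) j / ((j:ℚ)+1) - psD a y (s+1) j / ((j:ℚ)+1)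
      = -(psD a y (s+1) (j+1) / ((j:ℚ)+1)) := by
    intro j _
    rw [psD_pascal]
    ring
  rw [Finset.sum_congr rfl this, Finset.sum_neg_distrib, Finset.sum_range_succ,
    psD_vanish a y (show s+1 < s+2 by omega)]
  rw [psL5 a s y]
  push_cast; ring

lemma psF_ssum (a r : ℚ) (k : ℕ) : ∀ n : ℕ,
    psF a (r + a*n) (k+1) - psF a r (k+1)
      = ((k:ℚ)+1) * a * ∑ ℓ ∈ Finset.range n, (r + a*ℓ)^k := by
  intro n
  induction n with
  | zero => simp
  | succ n ih =>
    rw [Finset.sum_range_succ, show r + a*((n:ℕ)+1 : ℕ) = (r + a*(n:ℕ)) + a by push_cast; ring]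
    have := psF_step a (r + a*(n:ℕ)) k
    push_cast
    push_cast at ih this
    linarith [ih, this]

lemma psF_add (a : ℚ) (s : ℕ) (y z : ℚ) :
    psF a (y+z) s = ∑ t ∈ Finset.range (s+1), (Nat.choose s t : ℚ) * psF a y (s-t) * z^t := by
  unfold psF
  have expand : ∀ j ∈ Finset.range (s+1), psD a (y+z) s j / ((j:ℚ)+1)
      = ∑ t ∈ Finset.range (s+1), (Nat.choose s t : ℚ) * (psD a y (s-t) j / ((j:ℚ)+1)) * z^t := by
    intro j _
    unfold psD
    rw [Finset.sum_div]
    rw [show (∑ i ∈ Finset.range (j+1), (-1:ℚ)^i * ((Nat.choose j i : ℕ):ℚ) * (y + z + a*i)^s / ((j:ℚ)+1))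
        = ∑ i ∈ Finset.range (j+1), ∑ t ∈ Finset.range (s+1),
            (Nat.choose s t : ℚ) * ((-1:ℚ)^i * ((Nat.choose j i : ℕ):ℚ) * (y + a*i)^(s-t) / ((j:ℚ)+1)) * z^t from
      Finset.sum_congr rfl fun i _ => by
        have hb : (y + z + a*(i:ℚ))^s = ((y + a*(i:ℚ)) + z)^s := by ring_nf
        rw [hb, add_pow, Finset.mul_sum, Finset.sum_div, ← Finset.sum_range_reflect]
        refine Finset.sum_congr rfl fun t ht => ?_
        have ht' : t ≤ s := by simpa using Nat.lt_succ_iff.mp (Finset.mem_range.mp ht)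
        rw [show s + 1 - 1 - t = s - t from by omega, Nat.sub_sub_self ht',
          Nat.choose_symm ht']
        ring]
    rw [Finset.sum_comm]
    refine Finset.sum_congr rfl fun t _ => ?_
    rw [Finset.sum_div, Finset.mul_sum, Finset.sum_mul]
  rw [Finset.sum_congr rfl expand, Finset.sum_comm]
  refine Finset.sum_congr rfl fun t ht => ?_
  have ht' : t ≤ s := by simpa using Nat.lt_succ_iff.mp (Finset.mem_range.mp ht)
  rw [Finset.mul_sum, Finset.sum_mul]
  symm
  refine Finset.sum_subset (by
    intro x hx
    simp only [Finset.mem_range] at *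
    omega) ?_
  intro j _ hj
  simp only [Finset.mem_range, not_lt] at hj
  rw [psD_vanish a y (by omega : s - t < j)]
  simp

lemma whitney_psD (m r : ℕ) (hm : 1 ≤ m) (s j : ℕ) :
    (-1:ℚ)^j * ((m:ℚ)^j * (Nat.factorial j : ℚ) / ((j:ℚ)+1)) * rWhitney m r s j
      = psD (m:ℚ) (r:ℚ) s j / ((j:ℚ)+1) := by
  have hm0 : (m:ℚ) ≠ 0 := by
    have : (0:ℚ) < (m:ℚ) := by exact_mod_cast Nat.lt_of_lt_of_le Nat.zero_lt_one hm
    exact ne_of_gt this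
  have hmj : (m:ℚ)^j ≠ 0 := pow_ne_zero _ hm0
  have hf : (Nat.factorial j : ℚ) ≠ 0 := Nat.cast_ne_zero.mpr (Nat.factorial_ne_zero j)
  have hj1 : ((j:ℚ)+1) ≠ 0 := by positivity
  have hS : (-1:ℚ)^j * ∑ i ∈ Finset.range (j+1),
        (-1:ℚ)^(j-i) * (Nat.choose j i : ℚ) * ((m:ℚ)*i + r)^s
      = psD (m:ℚ) (r:ℚ) s j := by
    unfold psD
    rw [Finset.mul_sum]
    refine Finset.sum_congr rfl fun i hi => ?_
    have hij : i ≤ j := by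
      have := Finset.mem_range.mp hi; omega
    have hsign : (-1:ℚ)^j * (-1:ℚ)^(j-i) = (-1:ℚ)^i := by
      rw [← pow_add, show j + (j-i) = 2*(j-i) + i from by omega, pow_add, pow_mul]
      simp
    have hb : ((m:ℚ)*(i:ℚ) + (r:ℚ))^s = ((r:ℚ) + (m:ℚ)*(i:ℚ))^s := by ring_nf
    calc (-1:ℚ)^j * ((-1:ℚ)^(j-i) * (Nat.choose j i : ℚ) * ((m:ℚ)*i + r)^s)
        = ((-1:ℚ)^j * (-1:ℚ)^(j-i)) * (Nat.choose j i : ℚ) * ((m:ℚ)*i + r)^s := by ring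
      _ = _ := by rw [hsign, hb]
  rw [← hS]
  unfold rWhitney
  field_simp

/-- `S_k^{m,r}(n) = Σ_{t=1}^{k+1} c_{k,t}^{m,r} n^t` with
`c_{k,t}^{m,r} = (m^{t-1}/(k+1)) C(k+1,t) Σ_{j=0}^{k+1-t} (-1)^j (m^j j!/(j+1)) W_{m,r}(k+1-t,j)`. -/
theorem power_sum_coeff_whitney (m r k n : ℕ) (hm : 1 ≤ m) (hn : 1 ≤ n) :
    ∑ ℓ ∈ Finset.range n, ((ℓ : ℚ) * m + r) ^ k =
      ∑ t ∈ Finset.Icc 1 (k + 1),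
        ((m : ℚ) ^ (t - 1) / (k + 1) * (Nat.choose (k + 1) t : ℚ) *
          ∑ j ∈ Finset.range (k + 1 - t + 1),
            (-1 : ℚ) ^ j * ((m : ℚ) ^ j * (Nat.factorial j : ℚ) / (j + 1)) *
              rWhitney m r (k + 1 - t) j) * (n : ℚ) ^ t := by
  have ha' : (m:ℚ) ≠ 0 := by
    have : (0:ℚ) < (m:ℚ) := by exact_mod_cast Nat.lt_of_lt_of_le Nat.zero_lt_one hm
    exact ne_of_gt this
  have hk : ((k:ℚ)+1) ≠ 0 := by positivity
  rw [show (∑ ℓ ∈ Finset.range n, ((ℓ:ℚ)*m + r)^k)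
      = ∑ ℓ ∈ Finset.range n, ((r:ℚ) + (m:ℚ)*(ℓ:ℕ))^k from
    Finset.sum_congr rfl fun ℓ _ => by ring]
  have hRH : ∀ t ∈ Finset.Icc 1 (k+1),
      ((m:ℚ)^(t-1) / ((k:ℚ)+1) * (Nat.choose (k+1) t : ℚ) *
        ∑ j ∈ Finset.range (k+1-t+1),
          (-1:ℚ)^j * ((m:ℚ)^j * (Nat.factorial j:ℚ)/((j:ℚ)+1)) * rWhitney m r (k+1-t) j) * (n:ℚ)^t
      = (m:ℚ)^(t-1) / ((k:ℚ)+1) * (Nat.choose (k+1) t : ℚ) * psF (m:ℚ) (r:ℚ) (k+1-t) * (n:ℚ)^t := by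
    intro t _
    rw [Finset.sum_congr rfl (fun j _ => whitney_psD m r hm (k+1-t) j)]
    rfl
  rw [Finset.sum_congr rfl hRH]
  have key := psF_ssum (m:ℚ) (r:ℚ) k n
  rw [psF_add (m:ℚ) (k+1) (r:ℚ) ((m:ℚ)*(n:ℚ))] at key
  rw [Finset.sum_range_succ'] at key
  simp only [Nat.choose_zero_right, Nat.cast_one, pow_zero, Nat.sub_zero, one_mul, mul_one] at key
  rw [add_sub_cancel_right] at key
  apply mul_left_cancel₀ (mul_ne_zero hk ha')
  rw [← key, Finset.mul_sum]
  rw [show Finset.Icc 1 (k+1) = Finset.Ico 1 (k+2) from by exact (Finset.Ico_add_one_right_eq_Icc (a := 1) (b := k+1)).symm,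
    Finset.sum_Ico_eq_sum_range]
  rw [show k+2-1 = k+1 from rfl]
  refine Finset.sum_congr rfl fun i hi => ?_
  have hik : i ≤ k := by
    have := Finset.mem_range.mp hi; omega
  rw [show 1+i-1 = i from by omega, show k+1-(i+1) = k-i from by omega,
    show k+1-(1+i) = k-i from by omega, show (1:ℕ)+i = i+1 from by omega]
  rw [mul_pow]
  push_cast
  field_simp
  ring
end

section
/- For every integer k ≥ 0 and every rational number x, the k-th Bernoulli polynomial satisfies B_k(x) = Σ_{j=0}^{k} Σ_{i=j}^{k} ((j+1)/(i+1)) · S_1(i+1, j+1) · S_2(k, i) · x^j, where S_1 are the signed Stirling numbers of the first kind and S_2 are the Stirling numbers of the second kind. -/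
/-- The signed Stirling numbers of the first kind, as coefficients of the
falling factorial `x(x-1)⋯(x-n+1) = Σ_{j=0}^{n} S_1(n,j) x^j`. -/
noncomputable def stirlingFirst (n j : ℕ) : ℚ :=
  (∏ i ∈ Finset.range n, (Polynomial.X - Polynomial.C (i : ℚ))).coeff j

/-- The (unsigned) Stirling numbers of the second kind
`S_2(k,j) = (1/j!) Σ_{i=0}^{j} (-1)^{j-i} C(j,i) i^k`. -/
def stirlingSecond (k j : ℕ) : ℚ :=
  (1 / (Nat.factorial j : ℚ)) *
    ∑ i ∈ Finset.range (j + 1), (-1 : ℚ) ^ (j - i) * (Nat.choose j i : ℚ) * (i : ℚ) ^ k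

open Polynomial Finset

/-- Recurrence for the Stirling numbers of the second kind. -/
lemma s2_rec (k j : ℕ) :
    stirlingSecond (k+1) (j+1) = ((j:ℚ)+1) * stirlingSecond k (j+1) + stirlingSecond k j := by
  unfold stirlingSecond
  have key : (∑ r ∈ Finset.range (j+2), (-1:ℚ)^(j+1-r) * ((j+1).choose r : ℚ) * (r:ℚ)^(k+1))
      - ((j:ℚ)+1) * ∑ r ∈ Finset.range (j+2), (-1:ℚ)^(j+1-r) * ((j+1).choose r : ℚ) * (r:ℚ)^k
      = ((j:ℚ)+1) * ∑ r ∈ Finset.range (j+1), (-1:ℚ)^(j-r) * (j.choose r : ℚ) * (r:ℚ)^k := by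
    rw [Finset.mul_sum, Finset.mul_sum, ← Finset.sum_sub_distrib]
    rw [Finset.sum_range_succ]
    have hlast : (-1:ℚ)^(j+1-(j+1)) * ((j+1).choose (j+1) : ℚ) * ((j+1:ℕ):ℚ)^(k+1)
        - ((j:ℚ)+1) * ((-1:ℚ)^(j+1-(j+1)) * ((j+1).choose (j+1) : ℚ) * ((j+1:ℕ):ℚ)^k) = 0 := by
      simp [pow_succ]
      ring
    rw [hlast, add_zero]
    apply Finset.sum_congr rfl
    intro r hr
    have hr' : r ≤ j := Nat.lt_succ_iff.mp (Finset.mem_range.mp hr)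
    have hsub : j + 1 - r = (j - r) + 1 := by omega
    have hchoose : ((j+1).choose r : ℚ) * (((j:ℚ)+1) - (r:ℚ)) = ((j:ℚ)+1) * (j.choose r : ℚ) := by
      have h1 : (j+1).choose (r+1) * (r+1) = (j+1).choose r * (j+1-r) :=
        Nat.choose_succ_right_eq (j+1) r
      have h2 : (j+1) * j.choose r = (j+1).choose (r+1) * (r+1) := Nat.add_one_mul_choose_eq j r
      have h3 : (j+1).choose r * (j+1-r) = (j+1) * j.choose r := by omega
      have h4 : ((j:ℚ)+1) - (r:ℚ) = ((j+1-r : ℕ) : ℚ) := by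
        push_cast [Nat.cast_sub (by omega : r ≤ j+1)]
        ring
      rw [h4, ← Nat.cast_mul, h3]
      push_cast
      ring
    rw [hsub, pow_succ]
    linear_combination ((-1:ℚ)^(j-r) * (r:ℚ)^k) * hchoose
  have hfact : ((j+1).factorial : ℚ) = ((j:ℚ)+1) * (j.factorial : ℚ) := by
    push_cast [Nat.factorial_succ]; ring
  have hj1 : ((j:ℚ)+1) ≠ 0 := by positivity
  have hjf : (j.factorial : ℚ) ≠ 0 := Nat.cast_ne_zero.mpr (Nat.factorial_ne_zero j)
  rw [hfact]
  field_simp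
  linear_combination key

lemma s2_zero_right (k : ℕ) : stirlingSecond (k+1) 0 = 0 := by
  simp [stirlingSecond]

/-- `S_2(k,j) = 0` for `j > k`. -/
lemma s2_diag_zero : ∀ k j : ℕ, k < j → stirlingSecond k j = 0 := by
  intro k
  induction k with
  | zero =>
    intro j hj
    obtain ⟨m, rfl⟩ := Nat.exists_eq_add_of_lt hj
    simp only [zero_add] at *
    unfold stirlingSecond
    have h0 : ∀ r ∈ Finset.range (m+2), (-1:ℚ)^(m+1-r) * ((m+1).choose r : ℚ) * (r:ℚ)^0
        = (-1:ℚ)^(m+1) * ((-1:ℚ)^r * ((m+1).choose r : ℚ)) := by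
      intro r hr
      have hr' : r ≤ m+1 := Nat.lt_succ_iff.mp (Finset.mem_range.mp hr)
      have h1 : (-1:ℚ)^(m+1-r) * (-1:ℚ)^r = (-1:ℚ)^(m+1) := by
        rw [← pow_add, Nat.sub_add_cancel hr']
      have hrr : (-1:ℚ)^r * (-1:ℚ)^r = 1 := by
        rw [← pow_add, ← two_mul, pow_mul]; norm_num
      calc (-1:ℚ)^(m+1-r) * ((m+1).choose r : ℚ) * (r:ℚ)^0
          = ((-1:ℚ)^(m+1-r) * ((-1:ℚ)^r * (-1:ℚ)^r)) * ((m+1).choose r : ℚ) := by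
            rw [hrr]; ring
        _ = (-1:ℚ)^(m+1) * ((-1:ℚ)^r * ((m+1).choose r : ℚ)) := by
            rw [← mul_assoc, h1]; ring
    rw [Finset.sum_congr rfl h0, ← Finset.mul_sum]
    have : ∑ r ∈ Finset.range (m+2), (-1:ℚ)^r * ((m+1).choose r : ℚ) = 0 := by
      have := Int.alternating_sum_range_choose_of_ne (n := m+1) (by omega)
      exact_mod_cast congrArg (fun z : ℤ => (z : ℚ)) this
    rw [this]
    ring
  | succ k ih =>
    intro j hj
    obtain ⟨m, rfl⟩ : ∃ m, j = m + 1 := ⟨j - 1, by omega⟩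
    rw [s2_rec]
    rw [ih (m+1) (by omega), ih m (by omega)]
    ring

/-- The falling-factorial polynomial `x(x-1)⋯(x-n+1)`. -/
noncomputable def ff (n : ℕ) : Polynomial ℚ := ∏ i ∈ Finset.range n, (X - C (i : ℚ))

lemma ff_succ (n : ℕ) : ff (n+1) = ff n * (X - C (n:ℚ)) := Finset.prod_range_succ _ _

lemma ff_comp (n : ℕ) : (ff (n+1)).comp (X + 1) = (X + 1) * ff n := by
  rw [ff, Polynomial.prod_comp]
  rw [Finset.prod_range_succ']
  have h1 : ∀ i : ℕ, ((X : Polynomial ℚ) - C ((i+1 : ℕ) : ℚ)).comp (X + 1) = X - C (i : ℚ) := by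
    intro i
    simp only [sub_comp, X_comp, C_comp]
    rw [Nat.cast_add, Nat.cast_one, C_add, C_1]
    ring
  have h2 : ((X : Polynomial ℚ) - C ((0:ℕ):ℚ)).comp (X + 1) = X + 1 := by
    simp
  rw [h2, Finset.prod_congr rfl (fun i _ => h1 i)]
  rw [ff, mul_comm]

lemma ff_delta (n : ℕ) : (ff (n+1)).comp (X + 1) - ff (n+1) = C ((n:ℚ)+1) * ff n := by
  rw [ff_comp, ff_succ]
  rw [show (C ((n:ℚ)+1) : Polynomial ℚ) = C (n:ℚ) + 1 by rw [C_add, C_1]]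
  ring

/-- Newton's identity: `X^k = Σ_i S_2(k,i) (X)_i`. -/
lemma newton (k : ℕ) : ∑ i ∈ Finset.range (k+1), C (stirlingSecond k i) * ff i = X^k := by
  induction k with
  | zero =>
    have h00 : stirlingSecond 0 0 = 1 := by
      simp [stirlingSecond]
    simp [h00, ff]
  | succ k ih =>
    have step1 : (X : Polynomial ℚ)^(k+1)
        = ∑ i ∈ Finset.range (k+1), C (stirlingSecond k i) * ff (i+1)
        + ∑ i ∈ Finset.range (k+1), C ((i:ℚ) * stirlingSecond k i) * ff i := by
      calc (X : Polynomial ℚ)^(k+1) = X * X^k := by ring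
        _ = X * ∑ i ∈ Finset.range (k+1), C (stirlingSecond k i) * ff i := by rw [ih]
        _ = ∑ i ∈ Finset.range (k+1),
              (C (stirlingSecond k i) * ff (i+1) + C ((i:ℚ) * stirlingSecond k i) * ff i) := by
            rw [Finset.mul_sum]
            refine Finset.sum_congr rfl fun i _ => ?_
            rw [ff_succ, C_mul]
            ring
        _ = _ := Finset.sum_add_distrib
    have step2 : ∑ i ∈ Finset.range (k+1), C ((i:ℚ) * stirlingSecond k i) * ff i
        = ∑ i ∈ Finset.range (k+1), C (((i:ℚ)+1) * stirlingSecond k (i+1)) * ff (i+1) := by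
      have hext : ∑ i ∈ Finset.range (k+1), C ((i:ℚ) * stirlingSecond k i) * ff i
          = ∑ i ∈ Finset.range (k+2), C ((i:ℚ) * stirlingSecond k i) * ff i := by
        rw [Finset.sum_range_succ (n := k+1)]
        rw [s2_diag_zero k (k+1) (by omega)]
        simp
      rw [hext, Finset.sum_range_succ']
      push_cast
      simp
    rw [step1, step2, ← Finset.sum_add_distrib]
    rw [Finset.sum_range_succ' (fun i => C (stirlingSecond (k+1) i) * ff i) (k+1)]
    rw [s2_zero_right, C_0, zero_mul, add_zero]
    refine Finset.sum_congr rfl fun i _ => ?_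
    rw [s2_rec k i, C_add, C_mul]
    push_cast
    ring

/-- A polynomial invariant under `X ↦ X + 1` is constant. -/
lemma const_of_comp (p : Polynomial ℚ) (h : p.comp (X + 1) = p) : p = C (p.eval 0) := by
  have hn : ∀ n : ℕ, p.eval (n : ℚ) = p.eval 0 := by
    intro n
    induction n with
    | zero => norm_num
    | succ n ihn =>
      have := congrArg (fun q => Polynomial.eval (n : ℚ) q) h
      simp only [eval_comp, eval_add, eval_X, eval_one] at this
      push_cast
      rw [this]
      exact ihn
  have hroot : ∀ n : ℕ, (p - C (p.eval 0)).IsRoot (n : ℚ) := by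
    intro n
    simp [Polynomial.IsRoot, hn n]
  have hinf : Set.Infinite {x : ℚ | (p - C (p.eval 0)).IsRoot x} := by
    apply Set.Infinite.mono (s := Set.range (fun n : ℕ => (n : ℚ)))
    · rintro x ⟨n, rfl⟩
      exact hroot n
    · exact Set.infinite_range_of_injective Nat.cast_injective
  have := Polynomial.eq_zero_of_infinite_isRoot _ hinf
  linear_combination this

/-- The key polynomial identity. -/
lemma bernoulli_eq (k : ℕ) :
    Polynomial.bernoulli k = ∑ i ∈ Finset.range (k+1),
      C (stirlingSecond k i / ((i:ℚ)+1)) * Polynomial.derivative (ff (i+1)) := by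
  set G : Polynomial ℚ :=
    ∑ i ∈ Finset.range (k+1), C (stirlingSecond k i / ((i:ℚ)+1)) * ff (i+1) with hGdef
  set H : Polynomial ℚ := C (((k:ℚ)+1)⁻¹) * Polynomial.bernoulli (k+1) with hHdef
  have hG : G.comp (X + 1) - G = X^k := by
    rw [hGdef, Polynomial.sum_comp, ← Finset.sum_sub_distrib, ← newton k]
    refine Finset.sum_congr rfl fun i _ => ?_
    rw [C_mul_comp]
    have : C (stirlingSecond k i / ((i:ℚ)+1)) * (ff (i+1)).comp (X+1)
        - C (stirlingSecond k i / ((i:ℚ)+1)) * ff (i+1)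
        = C (stirlingSecond k i / ((i:ℚ)+1)) * ((ff (i+1)).comp (X+1) - ff (i+1)) := by ring
    rw [this, ff_delta, ← mul_assoc, ← C_mul,
      div_mul_cancel₀ _ (by positivity : ((i:ℚ)+1) ≠ 0)]
  have hH : H.comp (X + 1) - H = X^k := by
    apply Polynomial.funext
    intro x
    have hb := Polynomial.bernoulli_eval_one_add (k+1) x
    have hk1 : ((k:ℚ)+1) ≠ 0 := by positivity
    simp only [hHdef, eval_sub, eval_comp, eval_mul, eval_add, eval_X, eval_one, eval_C, eval_pow]
    rw [add_comm (x : ℚ) 1, hb]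
    push_cast [Nat.succ_sub_one]
    field_simp
    ring
  have hper : (G - H).comp (X + 1) = G - H := by
    rw [sub_comp]
    linear_combination hG - hH
  have hconst := const_of_comp _ hper
  have hder : Polynomial.derivative (G - H) = 0 := by
    rw [hconst]
    exact Polynomial.derivative_C
  rw [derivative_sub, sub_eq_zero] at hder
  have hHder : Polynomial.derivative H = Polynomial.bernoulli k := by
    rw [hHdef, Polynomial.derivative_C_mul, Polynomial.derivative_bernoulli_add_one]
    rw [← mul_assoc]
    have h2 : ((k : Polynomial ℚ) + 1) = C ((k:ℚ)+1) := by
      rw [C_add, C_1, C_eq_natCast]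
    rw [h2, ← C_mul, inv_mul_cancel₀ (by positivity : ((k:ℚ)+1) ≠ 0), C_1, one_mul]
  rw [← hHder, ← hder, hGdef, derivative_sum]
  refine Finset.sum_congr rfl fun i _ => ?_
  rw [Polynomial.derivative_C_mul]

lemma ff_natDegree (n : ℕ) : (ff n).natDegree = n := by
  rw [ff, Polynomial.natDegree_prod _ _ (fun i _ => X_sub_C_ne_zero _)]
  trans (∑ _i ∈ Finset.range n, 1)
  · exact Finset.sum_congr rfl fun i _ => Polynomial.natDegree_X_sub_C _
  · simp

lemma ff_coeff (n j : ℕ) : (ff n).coeff j = stirlingFirst n j := rfl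

lemma deriv_eval (i : ℕ) (x : ℚ) :
    (Polynomial.derivative (ff (i+1))).eval x
      = ∑ j ∈ Finset.range (i+1), ((j:ℚ)+1) * stirlingFirst (i+1) (j+1) * x^j := by
  have hdeg : (Polynomial.derivative (ff (i+1))).natDegree < i+1 := by
    have h1 : (ff (i+1)).natDegree = i+1 := ff_natDegree (i+1)
    have := Polynomial.natDegree_derivative_lt (p := ff (i+1)) (by rw [h1]; omega)
    omega
  rw [Polynomial.eval_eq_sum_range' hdeg]
  refine Finset.sum_congr rfl fun j _ => ?_
  rw [Polynomial.coeff_derivative, ff_coeff]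
  push_cast
  ring

/-- `B_k(x) = Σ_{j=0}^{k} Σ_{i=j}^{k} ((j+1)/(i+1)) S_1(i+1,j+1) S_2(k,i) x^j`. -/
theorem bernoulli_poly_stirling (k : ℕ) (x : ℚ) :
    (Polynomial.bernoulli k).eval x =
      ∑ j ∈ Finset.range (k + 1), ∑ i ∈ Finset.Icc j k,
        ((j : ℚ) + 1) / ((i : ℚ) + 1) * stirlingFirst (i + 1) (j + 1) *
          stirlingSecond k i * x ^ j := by
  rw [bernoulli_eq k]
  rw [Polynomial.eval_finset_sum]
  have hstep : ∀ i ∈ Finset.range (k+1),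
      (C (stirlingSecond k i / ((i:ℚ)+1)) * Polynomial.derivative (ff (i+1))).eval x
      = ∑ j ∈ Finset.range (i+1),
          ((j : ℚ) + 1) / ((i : ℚ) + 1) * stirlingFirst (i + 1) (j + 1) *
            stirlingSecond k i * x ^ j := by
    intro i _
    rw [Polynomial.eval_mul, Polynomial.eval_C, deriv_eval, Finset.mul_sum]
    refine Finset.sum_congr rfl fun j _ => ?_
    ring
  rw [Finset.sum_congr rfl hstep]
  refine Finset.sum_comm' ?_
  intro i j
  simp only [Finset.mem_range, Finset.mem_Icc]
  omega
end

section
/- For every integer k ≥ 0, the k-th Bernoulli number satisfies B_k = (-1)^k · Σ_{j=0}^{k} Σ_{i=j}^{k} ((j+1)/(i+1)) · S_1(i+1, j+1) · S_2(k, i), where S_1 are the signed Stirling numbers of the first kind and S_2 are the Stirling numbers of the second kind. -/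
namespace BernoulliStirlingAux

open Finset Polynomial Nat fwdDiff

lemma fwdDiff_pow_eq_zero (k : ℕ) : ∀ j, k < j →
    (Δ_[(1:ℕ)])^[j] (fun x : ℕ ↦ (x : ℚ) ^ k) = 0 := by
  induction k using Nat.strong_induction_on with
  | _ k IH =>
    intro j hj
    obtain ⟨j', rfl⟩ : ∃ j', j = j' + 1 := ⟨j - 1, by omega⟩
    rw [Function.iterate_succ_apply]
    have h1 : Δ_[(1:ℕ)] (fun x : ℕ ↦ (x : ℚ) ^ k)
        = ∑ m ∈ range k, (k.choose m : ℚ) • (fun x : ℕ ↦ (x : ℚ) ^ m) := by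
      funext x
      simp only [fwdDiff, Finset.sum_apply, Pi.smul_apply, smul_eq_mul]
      push_cast
      rw [add_pow, sum_range_succ]
      simp only [Nat.choose_self, Nat.cast_one, mul_one, one_pow, pow_zero,
        add_sub_cancel_right]
      exact Finset.sum_congr rfl fun m _ => by ring
    rw [h1, fwdDiff_iter_finset_sum]
    have : ∀ m ∈ range k, (Δ_[(1:ℕ)])^[j'] ((k.choose m : ℚ) • (fun x : ℕ ↦ (x : ℚ) ^ m)) = 0 := by
      intro m hm
      have hmk := mem_range.mp hm
      rw [fwdDiff_iter_const_smul, IH m hmk j' (by omega)]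
      simp
    rw [Finset.sum_congr rfl this]
    simp

lemma key0 (k j : ℕ) :
    (Δ_[(1:ℕ)])^[j] (fun x : ℕ ↦ (x : ℚ) ^ k) 0 = (j ! : ℚ) * _root_.stirlingSecond k j := by
  rw [fwdDiff_iter_eq_sum_shift, _root_.stirlingSecond, ← mul_assoc, mul_one_div,
    div_self (by exact_mod_cast j.factorial_ne_zero), one_mul]
  refine Finset.sum_congr rfl fun i _ => ?_
  have : (0 + i • 1 : ℕ) = i := by simp
  rw [this, zsmul_eq_mul]
  push_cast
  ring

lemma stirlingSecond_eq_zero {k j : ℕ} (h : k < j) : _root_.stirlingSecond k j = 0 := by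
  have h2 := key0 k j
  rw [fwdDiff_pow_eq_zero k j h] at h2
  simp only [Pi.zero_apply] at h2
  have : (j ! : ℚ) ≠ 0 := by exact_mod_cast j.factorial_ne_zero
  field_simp at h2
  exact (mul_eq_zero.mp h2.symm).resolve_left this

lemma L1 (k n : ℕ) :
    ∑ j ∈ range (k + 1), _root_.stirlingSecond k j * (n.descFactorial j : ℚ) = (n : ℚ) ^ k := by
  have GN := shift_eq_sum_fwdDiff_iter (1 : ℕ) (fun x : ℕ ↦ (x : ℚ) ^ k) n 0
  simp only [zero_add, smul_eq_mul, mul_one, key0] at GN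
  have GN2 : (n : ℚ) ^ k = ∑ j ∈ range (n + 1), _root_.stirlingSecond k j * (n.descFactorial j : ℚ) := by
    rw [GN]
    refine Finset.sum_congr rfl fun j _ => ?_
    rw [nsmul_eq_mul, Nat.descFactorial_eq_factorial_mul_choose]
    push_cast
    ring
  have hzero : ∀ j ∈ range (max k n + 1) \ range (k + 1),
      _root_.stirlingSecond k j * (n.descFactorial j : ℚ) = 0 := by
    intro j hj
    simp only [mem_sdiff, mem_range] at hj
    rw [stirlingSecond_eq_zero (by omega), zero_mul]
  have hzero2 : ∀ j ∈ range (max k n + 1) \ range (n + 1),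
      _root_.stirlingSecond k j * (n.descFactorial j : ℚ) = 0 := by
    intro j hj
    simp only [mem_sdiff, mem_range] at hj
    rw [Nat.descFactorial_eq_zero_iff_lt.mpr (by omega)]
    simp
  calc ∑ j ∈ range (k + 1), _root_.stirlingSecond k j * (n.descFactorial j : ℚ)
      = ∑ j ∈ range (max k n + 1), _root_.stirlingSecond k j * (n.descFactorial j : ℚ) :=
        Finset.sum_subset (Finset.range_subset_range.mpr (by omega))
          (fun x h1 h2 => hzero x (mem_sdiff.mpr ⟨h1, h2⟩))
    _ = ∑ j ∈ range (n + 1), _root_.stirlingSecond k j * (n.descFactorial j : ℚ) :=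
        (Finset.sum_subset (Finset.range_subset_range.mpr (by omega))
          (fun x h1 h2 => hzero2 x (mem_sdiff.mpr ⟨h1, h2⟩))).symm
    _ = (n : ℚ) ^ k := GN2.symm

lemma M1 (k : ℕ) :
    ∑ j ∈ range (k + 1), C (_root_.stirlingSecond k j) * descPochhammer ℚ j = X ^ k := by
  apply eq_of_infinite_eval_eq
  apply (Set.infinite_range_of_injective (Nat.cast_injective (R := ℚ))).mono
  rintro x ⟨n, rfl⟩
  simp only [Set.mem_setOf_eq, eval_finset_sum, eval_mul, eval_C, eval_pow, eval_X,
    descPochhammer_eval_eq_descFactorial]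
  exact L1 k n

lemma prod_eq_dP (n : ℕ) :
    (∏ i ∈ range n, (X - C (i : ℚ))) = descPochhammer ℚ n := by
  induction n with
  | zero => simp [descPochhammer_zero]
  | succ n ih =>
    rw [prod_range_succ, ih, descPochhammer_succ_right]
    simp [Polynomial.C_eq_natCast]

lemma stirlingFirst_eq (n j : ℕ) : _root_.stirlingFirst n j = (descPochhammer ℚ n).coeff j := by
  rw [_root_.stirlingFirst, prod_eq_dP]

lemma coeff_zero_dP (m : ℕ) : (descPochhammer ℚ m).coeff 0 = if m = 0 then 1 else 0 := by
  rw [Polynomial.coeff_zero_eq_eval_zero, descPochhammer_eval_zero]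

lemma coeff_one_dP (m : ℕ) : (descPochhammer ℚ (m + 1)).coeff 1 = (-1) ^ m * m ! := by
  induction m with
  | zero => simp [descPochhammer_one]
  | succ m ih =>
    rw [descPochhammer_succ_right, show ((m + 1 : ℕ) : ℚ[X]) = C ((m + 1 : ℕ) : ℚ) by
      simp [Polynomial.C_eq_natCast], mul_sub, Polynomial.coeff_sub, Polynomial.coeff_mul_C,
      show (1 : ℕ) = 0 + 1 from rfl, Polynomial.coeff_mul_X, coeff_zero_dP, ih]
    simp [Nat.factorial_succ]
    ring

lemma eval_one_dP (m : ℕ) : (descPochhammer ℚ (m + 1)).eval 1 = if m = 0 then 1 else 0 := by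
  have h := descPochhammer_eval_eq_descFactorial (R := ℚ) 1 (m + 1)
  rw [Nat.cast_one] at h
  rw [h]
  cases m with
  | zero => simp
  | succ m =>
    rw [Nat.descFactorial_eq_zero_iff_lt.mpr (by omega)]
    simp

lemma eval_one_deriv (i : ℕ) : ((descPochhammer ℚ (i + 1)).derivative).eval 1
    = if i = 0 then 1 else (-1 : ℚ) ^ (i - 1) * ((i - 1)! : ℚ) := by
  induction i with
  | zero => simp [descPochhammer_one]
  | succ i ih =>
    rw [descPochhammer_succ_right, derivative_mul]
    simp only [derivative_sub, derivative_X, derivative_natCast, sub_zero, mul_one, eval_add,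
      eval_mul, eval_sub, eval_X, eval_natCast, ih, eval_one_dP]
    cases i with
    | zero => norm_num
    | succ i =>
      simp only [Nat.succ_ne_zero, if_false, Nat.succ_sub_one]
      push_cast [Nat.factorial_succ]
      ring

lemma derivD (i : ℕ) : ∑ j ∈ range (i + 1), ((j : ℚ) + 1) * _root_.stirlingFirst (i + 1) (j + 1)
    = ((descPochhammer ℚ (i + 1)).derivative).eval 1 := by
  have hdeg : ((descPochhammer ℚ (i + 1)).derivative).natDegree < i + 1 := by
    have h1 : (descPochhammer ℚ (i + 1)).natDegree = i + 1 := descPochhammer_natDegree (R := ℚ) _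
    have h2 := Polynomial.natDegree_derivative_le (descPochhammer ℚ (i + 1))
    omega
  rw [Polynomial.eval_eq_sum_range' hdeg]
  refine Finset.sum_congr rfl fun j _ => ?_
  rw [Polynomial.coeff_derivative, stirlingFirst_eq]
  ring

lemma descFactorial_step (n i : ℕ) :
    (((n + 1).descFactorial (i + 1) : ℕ) : ℚ)
      = (n.descFactorial (i + 1) : ℚ) + ((i : ℚ) + 1) * (n.descFactorial i : ℚ) := by
  rcases le_or_gt i n with h | h
  · rw [Nat.succ_descFactorial_succ, Nat.descFactorial_succ]
    have : ((n - i : ℕ) : ℚ) = (n : ℚ) - i := by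
      push_cast [h]
      ring
    push_cast
    rw [this]
    ring
  · rw [Nat.descFactorial_eq_zero_iff_lt.mpr (show n < i from h),
      Nat.descFactorial_eq_zero_iff_lt.mpr (by omega),
      Nat.descFactorial_eq_zero_iff_lt.mpr (by omega)]
    simp

lemma sumQ (k n : ℕ) : ∑ x ∈ range n, (x : ℚ) ^ k
    = ∑ i ∈ range (k + 1), _root_.stirlingSecond k i / ((i : ℚ) + 1) * (n.descFactorial (i + 1) : ℚ) := by
  induction n with
  | zero => simp
  | succ n ih =>
    rw [sum_range_succ, ih, ← L1 k n, ← Finset.sum_add_distrib]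
    refine Finset.sum_congr rfl fun i _ => ?_
    rw [descFactorial_step]
    have hne : ((i : ℚ) + 1) ≠ 0 := by positivity
    field_simp

lemma formulaA (k : ℕ) : _root_.bernoulli k
    = ∑ i ∈ range (k + 1), _root_.stirlingSecond k i / ((i : ℚ) + 1) * ((-1) ^ i * (i ! : ℚ)) := by
  have hPQ : (∑ j ∈ range (k + 1),
        C (_root_.bernoulli j * ((k + 1).choose j : ℚ) / ((k : ℚ) + 1)) * X ^ (k + 1 - j))
      = ∑ i ∈ range (k + 1), C (_root_.stirlingSecond k i / ((i : ℚ) + 1)) * descPochhammer ℚ (i + 1) := by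
    apply eq_of_infinite_eval_eq
    apply (Set.infinite_range_of_injective (Nat.cast_injective (R := ℚ))).mono
    rintro x ⟨n, rfl⟩
    simp only [Set.mem_setOf_eq, eval_finset_sum, eval_mul, eval_C, eval_pow, eval_X,
      descPochhammer_eval_eq_descFactorial]
    rw [← sumQ k n, _root_.sum_range_pow n k]
    push_cast
    refine Finset.sum_congr rfl fun j _ => ?_
    ring
  have h1 := congrArg (fun p => p.coeff 1) hPQ
  simp only [finset_sum_coeff, Polynomial.coeff_C_mul, Polynomial.coeff_X_pow,
    coeff_one_dP] at h1
  rw [Finset.sum_eq_single k (fun j hj hne => by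
      rw [if_neg (by simp only [mem_range] at hj; omega), mul_zero])
    (fun h => absurd (self_mem_range_succ k) h)] at h1
  rw [if_pos (by omega), mul_one, Nat.choose_succ_self_right] at h1
  have hk1 : ((k : ℚ) + 1) ≠ 0 := by positivity
  have heq : _root_.bernoulli k * ((k + 1 : ℕ) : ℚ) / ((k : ℚ) + 1) = _root_.bernoulli k := by
    push_cast
    field_simp
  rw [heq] at h1
  exact h1

lemma L2 (k : ℕ) : ∑ i ∈ range (k + 1), _root_.stirlingSecond k i * (descPochhammer ℚ i).coeff 1
    = if k = 1 then 1 else 0 := by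
  have h1 := congrArg (fun p => p.coeff 1) (M1 k)
  simp only [finset_sum_coeff, Polynomial.coeff_C_mul, Polynomial.coeff_X_pow] at h1
  rw [h1]
  simp [eq_comm]

end BernoulliStirlingAux

/-- `B_k = (-1)^k Σ_{j=0}^{k} Σ_{i=j}^{k} ((j+1)/(i+1)) S_1(i+1,j+1) S_2(k,i)`. -/
theorem bernoulli_stirling_identity (k : ℕ) :
    bernoulli k =
      (-1 : ℚ) ^ k *
        ∑ j ∈ Finset.range (k + 1), ∑ i ∈ Finset.Icc j k,
          ((j : ℚ) + 1) / ((i : ℚ) + 1) * stirlingFirst (i + 1) (j + 1) *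
            stirlingSecond k i := by
  have hswap : (∑ j ∈ Finset.range (k + 1), ∑ i ∈ Finset.Icc j k,
        ((j : ℚ) + 1) / ((i : ℚ) + 1) * stirlingFirst (i + 1) (j + 1) * stirlingSecond k i)
      = ∑ i ∈ Finset.range (k + 1), ∑ j ∈ Finset.range (i + 1),
        ((j : ℚ) + 1) / ((i : ℚ) + 1) * stirlingFirst (i + 1) (j + 1) * stirlingSecond k i := by
    apply Finset.sum_comm'
    intro j i
    simp only [Finset.mem_range, Finset.mem_Icc]
    omega
  have hinner : ∀ i, (∑ j ∈ Finset.range (i + 1),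
        ((j : ℚ) + 1) / ((i : ℚ) + 1) * stirlingFirst (i + 1) (j + 1) * stirlingSecond k i)
      = stirlingSecond k i * (1 / ((i : ℚ) + 1))
          * ((descPochhammer ℚ (i + 1)).derivative).eval 1 := by
    intro i
    rw [← BernoulliStirlingAux.derivD, Finset.mul_sum]
    refine Finset.sum_congr rfl fun j _ => ?_
    ring
  have key : (-1 : ℚ) ^ k * bernoulli k = ∑ i ∈ Finset.range (k + 1),
      stirlingSecond k i * (1 / ((i : ℚ) + 1))
        * ((descPochhammer ℚ (i + 1)).derivative).eval 1 := by
    have hflip : (-1 : ℚ) ^ k * bernoulli k = bernoulli k + (if k = 1 then 1 else 0) := by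
      by_cases hk : k = 1
      · subst hk
        norm_num [bernoulli_one]
      · have hb : bernoulli k = (-1 : ℚ) ^ k * bernoulli' k := rfl
        rw [if_neg hk, add_zero]
        conv_lhs => rw [hb]
        rw [← mul_assoc, ← pow_add, Even.neg_one_pow ⟨k, rfl⟩, one_mul,
          ← bernoulli_eq_bernoulli'_of_ne_one hk]
    rw [hflip, BernoulliStirlingAux.formulaA, ← BernoulliStirlingAux.L2 k, ← Finset.sum_add_distrib]
    refine Finset.sum_congr rfl fun i _ => ?_
    rw [BernoulliStirlingAux.eval_one_deriv]
    cases i with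
    | zero => norm_num [descPochhammer_zero, Polynomial.coeff_one]
    | succ i =>
      rw [BernoulliStirlingAux.coeff_one_dP]
      simp only [Nat.succ_ne_zero, if_false, Nat.succ_sub_one]
      have hne : ((i : ℚ) + 1 + 1) ≠ 0 := by positivity
      push_cast [Nat.factorial_succ]
      field_simp
      ring
  rw [hswap, Finset.sum_congr rfl fun i _ => hinner i, ← key, ← mul_assoc, ← pow_add,
    Even.neg_one_pow ⟨k, rfl⟩, one_mul]
end

section
/- For all integers k, j with 0 ≤ j ≤ k, one has C(k, j) · B_{k-j} = (j+1) · Σ_{i=j}^{k} (1/(i+1)) · S_1(i+1, j+1) · S_2(k, i), where B_{k-j} is the (k−j)-th Bernoulli number, S_1 are the signed Stirling numbers of the first kind, and S_2 are the Stirling numbers of the second kind. -/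
section Aux
open Polynomial Finset

lemma alt_sum (n N : ℕ) (h : n ≤ N) :
    ∑ t ∈ range (N + 1), (-1 : ℚ) ^ t * (n.choose t : ℚ) = if n = 0 then 1 else 0 := by
  have base : ∑ t ∈ range (n + 1), (-1 : ℚ) ^ t * (n.choose t : ℚ)
      = if n = 0 then 1 else 0 := by
    have := @Int.alternating_sum_range_choose n
    have := congrArg (fun z : ℤ => (z : ℚ)) this
    push_cast at this
    simpa using this
  rw [← base]
  apply (Finset.sum_subset (Finset.range_subset_range.mpr (by omega)) ?_).symm
  intro t ht hnt
  simp only [Finset.mem_range] at ht hnt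
  rw [Nat.choose_eq_zero_of_lt (by omega)]
  simp

lemma choose_mul_choose (m i l : ℕ) (hl : l ≤ i) :
    (m.choose i : ℚ) * (i.choose l : ℚ) = (m.choose l : ℚ) * ((m - l).choose (i - l) : ℚ) := by
  rcases le_or_gt i m with h | h
  · have := Nat.choose_mul (n := m) hl
    exact_mod_cast congrArg (fun z : ℕ => (z : ℚ)) this
  · rw [Nat.choose_eq_zero_of_lt h]
    rcases le_or_gt l m with h2 | h2
    · rw [Nat.choose_eq_zero_of_lt (show m - l < i - l by omega)]; ring
    · rw [Nat.choose_eq_zero_of_lt h2]; ring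

lemma innerSum (k m l : ℕ) (hm : m ≤ k) :
    ∑ i ∈ Icc l k, (-1 : ℚ) ^ (i - l) * (i.choose l : ℚ) * (m.choose i : ℚ)
      = if l = m then 1 else 0 := by
  have step : ∀ i ∈ Icc l k, (-1 : ℚ) ^ (i - l) * (i.choose l : ℚ) * (m.choose i : ℚ)
      = (m.choose l : ℚ) * ((-1 : ℚ) ^ (i - l) * ((m - l).choose (i - l) : ℚ)) := by
    intro i hi
    simp only [Finset.mem_Icc] at hi
    rw [mul_assoc, mul_comm ((i.choose l : ℚ)), ← mul_assoc, mul_assoc,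
      choose_mul_choose m i l hi.1]
    ring
  rw [Finset.sum_congr rfl step, ← Finset.mul_sum]
  rw [← Finset.Ico_add_one_right_eq_Icc, Finset.sum_Ico_eq_sum_range]
  rcases le_or_gt l m with hlm | hlm
  · have : ∑ t ∈ range (k + 1 - l), (-1 : ℚ) ^ (l + t - l) * ((m - l).choose (l + t - l) : ℚ)
        = if m - l = 0 then 1 else 0 := by
      have hkl : k + 1 - l = (k - l) + 1 := by omega
      rw [hkl]
      have := alt_sum (m - l) (k - l) (by omega)
      rw [← this]
      apply Finset.sum_congr rfl
      intro t _
      congr 1 <;> rw [Nat.add_sub_cancel_left]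
    rw [this]
    rcases eq_or_ne l m with rfl | hne
    · simp
    · rw [if_neg hne, if_neg (by omega)]; ring
  · rw [Nat.choose_eq_zero_of_lt hlm]
    rw [if_neg (by omega)]
    simp

lemma keyC (k m : ℕ) (hm : m ≤ k) :
    ∑ i ∈ range (k + 1), ∑ l ∈ range (i + 1),
      (-1 : ℚ) ^ (i - l) * (i.choose l : ℚ) * (l : ℚ) ^ k * (m.choose i : ℚ)
      = (m : ℚ) ^ k := by
  rw [Finset.sum_comm' (t' := range (k + 1)) (s' := fun l => Icc l k)
    (by intro i l; simp only [Finset.mem_range, Finset.mem_Icc]; omega)]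
  have : ∀ l ∈ range (k + 1),
      ∑ i ∈ Icc l k, (-1 : ℚ) ^ (i - l) * (i.choose l : ℚ) * (l : ℚ) ^ k * (m.choose i : ℚ)
      = (l : ℚ) ^ k * (if l = m then 1 else 0) := by
    intro l _
    rw [← innerSum k m l hm, Finset.mul_sum]
    apply Finset.sum_congr rfl
    intro i _
    ring
  rw [Finset.sum_congr rfl this]
  simp only [mul_ite, mul_one, mul_zero]
  rw [Finset.sum_ite_eq' (range (k + 1)) m (fun l => (l : ℚ) ^ k)]
  simp [Nat.lt_succ_iff, hm]


noncomputable def Ppoly (k : ℕ) : ℚ[X] :=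
  ∑ i ∈ range (k + 1), C (stirlingSecond k i * (1 / ((i : ℚ) + 1))) * descPochhammer ℚ (i + 1)

noncomputable def Qpoly (k : ℕ) : ℚ[X] :=
  ∑ l ∈ range (k + 1),
    C (_root_.bernoulli l * (((k + 1).choose l : ℕ) : ℚ) / ((k : ℚ) + 1)) * X ^ (k + 1 - l)

lemma sum_range_choose' (n i : ℕ) : ∑ m ∈ range n, m.choose i = n.choose (i + 1) := by
  induction n with
  | zero => simp
  | succ n ih => rw [Finset.sum_range_succ, ih, Nat.choose_succ_succ' (n) (i)]; omega

lemma evalQ (k : ℕ) (n : ℕ) :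
    (Qpoly k).eval (n : ℚ) = ∑ m ∈ range n, (m : ℚ) ^ k := by
  rw [sum_range_pow n k, Qpoly, Polynomial.eval_finset_sum]
  apply Finset.sum_congr rfl
  intro l _
  simp only [eval_mul, eval_C, eval_pow, eval_X]
  ring

lemma descFactorial_cast (n i : ℕ) :
    ((n.descFactorial (i + 1) : ℕ) : ℚ) = ((i + 1).factorial : ℚ) * (n.choose (i + 1) : ℚ) := by
  rw [Nat.descFactorial_eq_factorial_mul_choose]
  push_cast
  ring

lemma evalP (k : ℕ) (n : ℕ) (hn : n ≤ k + 1) :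
    (Ppoly k).eval (n : ℚ) = ∑ m ∈ range n, (m : ℚ) ^ k := by
  have h1 : (Ppoly k).eval (n : ℚ)
      = ∑ i ∈ range (k + 1), ∑ l ∈ range (i + 1),
          (-1 : ℚ) ^ (i - l) * (i.choose l : ℚ) * (l : ℚ) ^ k * (n.choose (i + 1) : ℚ) := by
    rw [Ppoly, Polynomial.eval_finset_sum]
    apply Finset.sum_congr rfl
    intro i _
    rw [eval_mul, eval_C, descPochhammer_eval_eq_descFactorial, descFactorial_cast,
      stirlingSecond]
    have hfac : ((i + 1).factorial : ℚ) = ((i : ℚ) + 1) * (i.factorial : ℚ) := by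
      rw [Nat.factorial_succ]; push_cast; ring
    rw [hfac, ← Finset.sum_mul]
    have h0 : (i.factorial : ℚ) ≠ 0 := by exact_mod_cast i.factorial_ne_zero
    have h1 : ((i : ℚ) + 1) ≠ 0 := by positivity
    field_simp
  have h2 : ∀ i, (n.choose (i + 1) : ℚ) = ∑ m ∈ range n, (m.choose i : ℚ) := by
    intro i
    rw [← sum_range_choose' n i]
    push_cast
    rfl
  rw [h1]
  have h3 : ∀ i ∈ range (k + 1),
      (∑ l ∈ range (i + 1),
        (-1 : ℚ) ^ (i - l) * (i.choose l : ℚ) * (l : ℚ) ^ k * (n.choose (i + 1) : ℚ))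
      = ∑ m ∈ range n, ∑ l ∈ range (i + 1),
          (-1 : ℚ) ^ (i - l) * (i.choose l : ℚ) * (l : ℚ) ^ k * (m.choose i : ℚ) := by
    intro i _
    rw [Finset.sum_comm]
    apply Finset.sum_congr rfl
    intro l _
    rw [h2 i, Finset.mul_sum]
  rw [Finset.sum_congr rfl h3, Finset.sum_comm]
  apply Finset.sum_congr rfl
  intro m hm
  simp only [Finset.mem_range] at hm
  exact keyC k m (by omega)

lemma degP (k : ℕ) : (Ppoly k).degree < ((k + 2 : ℕ) : WithBot ℕ) := by
  apply lt_of_le_of_lt (Polynomial.degree_sum_le _ _)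
  rw [Finset.sup_lt_iff (by exact WithBot.bot_lt_coe _)]
  intro i hi
  simp only [Finset.mem_range] at hi
  calc (C (stirlingSecond k i * (1 / ((i : ℚ) + 1))) * descPochhammer ℚ (i + 1)).degree
      ≤ degree (C (stirlingSecond k i * (1 / ((i : ℚ) + 1)))) + degree (descPochhammer ℚ (i + 1)) :=
        Polynomial.degree_mul_le _ _
    _ ≤ 0 + ((i + 1 : ℕ) : WithBot ℕ) := by
        apply add_le_add Polynomial.degree_C_le
        rw [show ((i + 1 : ℕ) : WithBot ℕ) = ((descPochhammer ℚ (i + 1)).natDegree : WithBot ℕ)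
          from by rw [descPochhammer_natDegree]]
        exact Polynomial.degree_le_natDegree
    _ = ((i + 1 : ℕ) : WithBot ℕ) := zero_add _
    _ < ((k + 2 : ℕ) : WithBot ℕ) := by exact_mod_cast (by omega : i + 1 < k + 2)

lemma degQ (k : ℕ) : (Qpoly k).degree < ((k + 2 : ℕ) : WithBot ℕ) := by
  apply lt_of_le_of_lt (Polynomial.degree_sum_le _ _)
  rw [Finset.sup_lt_iff (by exact WithBot.bot_lt_coe _)]
  intro l hl
  simp only [Finset.mem_range] at hl
  calc (C (_root_.bernoulli l * (((k + 1).choose l : ℕ) : ℚ) / ((k : ℚ) + 1))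
          * X ^ (k + 1 - l)).degree
      ≤ 0 + degree ((X : ℚ[X]) ^ (k + 1 - l)) :=
        le_trans (Polynomial.degree_mul_le _ _) (add_le_add Polynomial.degree_C_le le_rfl)
    _ = ((k + 1 - l : ℕ) : WithBot ℕ) := by rw [zero_add, Polynomial.degree_X_pow]
    _ < ((k + 2 : ℕ) : WithBot ℕ) := by exact_mod_cast (by omega : k + 1 - l < k + 2)

lemma PeqQ (k : ℕ) : Ppoly k = Qpoly k := by
  set s : Finset ℚ := (range (k + 2)).image (fun n : ℕ => (n : ℚ)) with hs
  have hcard : s.card = k + 2 := by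
    rw [hs, Finset.card_image_of_injective _ Nat.cast_injective, Finset.card_range]
  apply Polynomial.eq_of_degrees_lt_of_eval_finset_eq s
  · rw [hcard]; exact degP k
  · rw [hcard]; exact degQ k
  · intro x hx
    obtain ⟨n, hn, rfl⟩ := Finset.mem_image.mp hx
    simp only [Finset.mem_range] at hn
    rw [evalP k n (by omega), evalQ k n]

lemma descPoch_eq_prod (n : ℕ) :
    descPochhammer ℚ n = ∏ i ∈ Finset.range n, (X - C (i : ℚ)) := by
  induction n with
  | zero => simp [descPochhammer_zero]
  | succ n ih =>
      rw [descPochhammer_succ_right, ih, Finset.prod_range_succ]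
      simp [Polynomial.C_eq_natCast]

lemma coeffP (k j : ℕ) :
    (Ppoly k).coeff (j + 1)
      = ∑ i ∈ range (k + 1),
          stirlingSecond k i * (1 / ((i : ℚ) + 1)) * stirlingFirst (i + 1) (j + 1) := by
  rw [Ppoly, Polynomial.finset_sum_coeff]
  apply Finset.sum_congr rfl
  intro i _
  rw [Polynomial.coeff_C_mul, descPoch_eq_prod]
  rfl

lemma coeffQ (k j : ℕ) (hjk : j ≤ k) :
    (Qpoly k).coeff (j + 1)
      = _root_.bernoulli (k - j) * (((k + 1).choose (k - j) : ℕ) : ℚ) / ((k : ℚ) + 1) := by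
  rw [Qpoly, Polynomial.finset_sum_coeff]
  have : ∀ l ∈ range (k + 1),
      (C (_root_.bernoulli l * (((k + 1).choose l : ℕ) : ℚ) / ((k : ℚ) + 1))
        * X ^ (k + 1 - l)).coeff (j + 1)
      = if l = k - j
        then _root_.bernoulli l * (((k + 1).choose l : ℕ) : ℚ) / ((k : ℚ) + 1) else 0 := by
    intro l hl
    simp only [Finset.mem_range] at hl
    rw [Polynomial.coeff_C_mul, Polynomial.coeff_X_pow]
    by_cases h : l = k - j
    · rw [if_pos h, if_pos (by omega), mul_one]
    · rw [if_neg h, if_neg (by omega), mul_zero]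
  rw [Finset.sum_congr rfl this, Finset.sum_ite_eq' (range (k + 1)) (k - j)]
  rw [if_pos (Finset.mem_range.mpr (by omega))]

lemma stirlingFirst_eq_zero (i j : ℕ) (h : i < j) : stirlingFirst (i + 1) (j + 1) = 0 := by
  rw [stirlingFirst, ← descPoch_eq_prod]
  apply Polynomial.coeff_eq_zero_of_natDegree_lt
  rw [descPochhammer_natDegree]
  omega

lemma main_aux (k j : ℕ) (hjk : j ≤ k) :
    (Nat.choose k j : ℚ) * _root_.bernoulli (k - j) =
      ((j : ℚ) + 1) *
        ∑ i ∈ Finset.Icc j k,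
          1 / ((i : ℚ) + 1) * stirlingFirst (i + 1) (j + 1) * stirlingSecond k i := by
  have hPQ := congrArg (fun p : ℚ[X] => p.coeff (j + 1)) (PeqQ k)
  rw [coeffP, coeffQ k j hjk] at hPQ
  have hsum : ∑ i ∈ Finset.Icc j k,
        1 / ((i : ℚ) + 1) * stirlingFirst (i + 1) (j + 1) * stirlingSecond k i
      = ∑ i ∈ range (k + 1),
          stirlingSecond k i * (1 / ((i : ℚ) + 1)) * stirlingFirst (i + 1) (j + 1) := by
    rw [Finset.sum_congr rfl (fun i _ => by
      ring : ∀ i ∈ Finset.Icc j k,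
        1 / ((i : ℚ) + 1) * stirlingFirst (i + 1) (j + 1) * stirlingSecond k i
        = stirlingSecond k i * (1 / ((i : ℚ) + 1)) * stirlingFirst (i + 1) (j + 1))]
    apply Finset.sum_subset
    · intro i hi
      simp only [Finset.mem_Icc] at hi
      exact Finset.mem_range.mpr (by omega)
    · intro i hi hni
      simp only [Finset.mem_range] at hi
      simp only [Finset.mem_Icc] at hni
      rw [stirlingFirst_eq_zero i j (by omega), mul_zero]
  rw [hsum, hPQ]
  have hnat : (k + 1) * k.choose j = (k + 1).choose (k - j) * (j + 1) := by
    have h1 : (k + 1).choose ((k + 1) - (j + 1)) = (k + 1).choose (j + 1) :=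
      Nat.choose_symm (by omega)
    have h2 : (k + 1) - (j + 1) = k - j := by omega
    rw [h2] at h1
    rw [h1]
    exact Nat.add_one_mul_choose_eq k j
  have hq : ((k : ℚ) + 1) * (k.choose j : ℚ) = (((k + 1).choose (k - j) : ℕ) : ℚ) * ((j : ℚ) + 1) := by
    exact_mod_cast hnat
  have hk1 : ((k : ℚ) + 1) ≠ 0 := by positivity
  field_simp
  linear_combination _root_.bernoulli (k - j) * hq

end Aux

/-- for `0 ≤ j ≤ k`,
`C(k,j) B_{k-j} = (j+1) Σ_{i=j}^{k} (1/(i+1)) S_1(i+1,j+1) S_2(k,i)`. -/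
theorem choose_mul_bernoulli_eq (k j : ℕ) (hjk : j ≤ k) :
    (Nat.choose k j : ℚ) * bernoulli (k - j) =
      ((j : ℚ) + 1) *
        ∑ i ∈ Finset.Icc j k,
          1 / ((i : ℚ) + 1) * stirlingFirst (i + 1) (j + 1) * stirlingSecond k i :=
  main_aux k j hjk
end

section
/- For all integers r ≥ 0 and k ≥ 0, one has B_k(r) = Σ_{j=0}^{k} (-1)^j · (j!/(j+1)) · S_{2,r}(k+r, j+r), where B_k(x) is the k-th Bernoulli polynomial and S_{2,r}(k+r, j+r) = (1/j!) Σ_{i=0}^{j} (-1)^{j-i} C(j,i) (i + r)^k are the r-Stirling numbers of the second kind. -/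
/-- The `r`-Stirling numbers of the second kind (shifted indexing):
`S_{2,r}(k+r, j+r) = (1/j!) Σ_{i=0}^{j} (-1)^{j-i} C(j,i) (i + r)^k`,
here recorded as a function of `r`, `k` and `j`. -/
def rStirlingSecond (r k j : ℕ) : ℚ :=
  (1 / (Nat.factorial j : ℚ)) *
    ∑ i ∈ Finset.range (j + 1),
      (-1 : ℚ) ^ (j - i) * (Nat.choose j i : ℚ) * ((i : ℚ) + r) ^ k


section BernoulliRStirlingProof


open Finset

/-- Alternating binomial sum of a function. -/
def altsum (h : ℕ → ℚ) (p : ℕ) : ℚ :=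
  ∑ l ∈ range (p + 1), (-1 : ℚ) ^ l * (p.choose l : ℚ) * h l

lemma altsum_succ (h : ℕ → ℚ) (p : ℕ) :
    altsum h (p + 1) = altsum h p - altsum (fun l => h (l + 1)) p := by
  unfold altsum
  rw [Finset.sum_range_succ' (fun l => (-1 : ℚ) ^ l * ((p+1).choose l : ℚ) * h l) (p+1)]
  have key : ∀ l, (-1 : ℚ) ^ (l+1) * (((p+1).choose (l+1) : ℕ) : ℚ) * h (l+1)
      = -((-1 : ℚ) ^ l * (p.choose l : ℚ) * h (l+1)) + (-1:ℚ)^(l+1) * (p.choose (l+1) : ℚ) * h (l+1) := by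
    intro l
    rw [Nat.choose_succ_succ]
    push_cast
    ring
  rw [Finset.sum_congr rfl fun l _ => key l, Finset.sum_add_distrib]
  have h2 : ∑ l ∈ range (p+1), (-1:ℚ)^(l+1) * (p.choose (l+1) : ℚ) * h (l+1)
      = ∑ l ∈ range (p+1), (-1:ℚ)^l * (p.choose l : ℚ) * h l
        - (-1:ℚ)^0 * (p.choose 0 : ℚ) * h 0 := by
    rw [Finset.sum_range_succ' (fun l => (-1 : ℚ) ^ l * (p.choose l : ℚ) * h l) p]
    rw [Finset.sum_range_succ]
    simp [Nat.choose_succ_self]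
  rw [h2]
  simp [Finset.sum_neg_distrib]
  ring

lemma altsum_sum {S : Finset ℕ} (f : ℕ → ℕ → ℚ) (c : ℕ → ℚ) (p : ℕ) :
    altsum (fun l => ∑ s ∈ S, c s * f s l) p = ∑ s ∈ S, c s * altsum (fun l => f s l) p := by
  unfold altsum
  simp only [Finset.mul_sum]
  rw [Finset.sum_comm]
  refine Finset.sum_congr rfl fun s _ => Finset.sum_congr rfl fun l _ => by ring

lemma altsum_pow_eq_zero : ∀ t : ℕ, ∀ M : ℕ, ∀ x : ℚ, t < M →
    altsum (fun l => (x + l) ^ t) M = 0 := by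
  intro t
  induction t using Nat.strong_induction_on with
  | _ t ih =>
    intro M x htM
    obtain ⟨p, rfl⟩ : ∃ p, M = p + 1 := ⟨M - 1, by omega⟩
    rw [altsum_succ]
    have expand : altsum (fun l => (x + ↑(l + 1)) ^ t) p
        = ∑ s ∈ range (t + 1), (t.choose s : ℚ) * altsum (fun l => (x + (l:ℚ)) ^ s) p := by
      rw [← altsum_sum (fun s l => (x + (l:ℚ)) ^ s) (fun s => (t.choose s : ℚ)) p]
      unfold altsum
      refine Finset.sum_congr rfl fun l _ => ?_
      congr 1
      push_cast
      rw [show x + ((l : ℚ) + 1) = (x + l) + 1 by ring, add_pow]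
      simp [mul_comm]
    rw [expand, Finset.sum_range_succ]
    simp only [Nat.choose_self, Nat.cast_one, one_mul]
    have hz : ∀ s ∈ range t, (t.choose s : ℚ) * altsum (fun l => (x + l) ^ s) p = 0 := by
      intro s hs
      rw [ih s (Finset.mem_range.mp hs) p x (by have := Finset.mem_range.mp hs; omega)]
      ring
    rw [Finset.sum_congr rfl hz]
    simp

lemma key_scalar (t M : ℕ) (htM : t ≤ M) :
    ∑ m ∈ range M, (1/(m+1:ℚ)) * altsum (fun l => (l:ℚ)^t) (m+1)
      = -(if t = 1 then 1 else 0) := by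
  cases t with
  | zero =>
    have hz : ∀ m ∈ range M, (1/(m+1:ℚ)) * altsum (fun l => (l:ℚ)^0) (m+1) = 0 := by
      intro m _
      have : altsum (fun l => ((0:ℚ) + l)^0) (m+1) = 0 :=
        altsum_pow_eq_zero 0 (m+1) 0 (Nat.succ_pos m)
      simp only [zero_add] at this
      rw [this, mul_zero]
    rw [Finset.sum_congr rfl hz]
    simp
  | succ t' =>
    have step : ∀ m : ℕ, (1/(m+1:ℚ)) * altsum (fun l => (l:ℚ)^(t'+1)) (m+1)
        = -(altsum (fun l => (((l+1):ℕ):ℚ)^t') m) := by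
      intro m
      unfold altsum
      rw [Finset.sum_range_succ' (fun l => (-1:ℚ)^l * ((m+1).choose l : ℚ) * ((l:ℕ):ℚ)^(t'+1)) (m+1)]
      have key : ∀ l : ℕ, (-1:ℚ)^(l+1) * (((m+1).choose (l+1) : ℕ):ℚ) * (((l+1):ℕ):ℚ)^(t'+1)
          = ((m:ℚ)+1) * (-((-1:ℚ)^l * (m.choose l : ℚ) * (((l+1):ℕ):ℚ)^t')) := by
        intro l
        have hc : (((m+1).choose (l+1) : ℕ):ℚ) * (((l+1):ℕ):ℚ) = ((m:ℚ)+1) * (m.choose l : ℚ) := by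
          have := Nat.add_one_mul_choose_eq m l
          have h2 : ((Nat.succ m * m.choose l : ℕ) : ℚ) = (((m+1).choose (l+1) * (l+1) : ℕ) : ℚ) := by
            exact_mod_cast congrArg (fun n : ℕ => (n:ℚ)) this
          push_cast at h2 ⊢
          linarith
        have hp : (((l+1):ℕ):ℚ)^(t'+1) = (((l+1):ℕ):ℚ) * (((l+1):ℕ):ℚ)^t' := by
          rw [pow_succ]; ring
        rw [hp]
        calc (-1:ℚ)^(l+1) * (((m+1).choose (l+1) : ℕ):ℚ) * ((((l+1):ℕ):ℚ) * (((l+1):ℕ):ℚ)^t')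
            = (-1:ℚ)^(l+1) * ((((m+1).choose (l+1) : ℕ):ℚ) * (((l+1):ℕ):ℚ)) * (((l+1):ℕ):ℚ)^t' := by ring
          _ = (-1:ℚ)^(l+1) * (((m:ℚ)+1) * (m.choose l : ℚ)) * (((l+1):ℕ):ℚ)^t' := by rw [hc]
          _ = ((m:ℚ)+1) * (-((-1:ℚ)^l * (m.choose l : ℚ) * (((l+1):ℕ):ℚ)^t')) := by
              rw [pow_succ]; ring
      rw [Finset.sum_congr rfl fun l _ => key l]
      rw [← Finset.mul_sum]
      have h0 : ((0:ℕ):ℚ)^(t'+1) = 0 := by simp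
      simp only [Nat.cast_zero, pow_succ, h0]
      have hm : ((m:ℚ)+1) ≠ 0 := by positivity
      field_simp
      simp only [Finset.sum_neg_distrib]
      ring
    rw [Finset.sum_congr rfl fun m _ => step m]
    have tele : ∀ m : ℕ, altsum (fun l => (((l+1):ℕ):ℚ)^t') m
        = altsum (fun l => (l:ℚ)^t') m - altsum (fun l => (l:ℚ)^t') (m+1) := by
      intro m
      rw [altsum_succ]
      ring
    rw [Finset.sum_congr rfl fun m _ => congrArg Neg.neg (tele m)]
    simp only [neg_sub]
    rw [Finset.sum_range_sub (fun m => altsum (fun l => (l:ℚ)^t') m) M]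
    have hM : altsum (fun l => (l:ℚ)^t') M = 0 := by
      have : altsum (fun l => ((0:ℚ) + l)^t') M = 0 :=
        altsum_pow_eq_zero t' M 0 (by omega)
      simpa using this
    have h0 : altsum (fun l => (l:ℚ)^t') 0 = (0:ℚ)^t' := by
      unfold altsum; simp
    rw [hM, h0]
    cases t' <;> simp

/-- The conjectured closed form for the Bernoulli polynomial value. -/
def RHSfun (k : ℕ) (x : ℚ) : ℚ :=
  ∑ j ∈ range (k + 1), (1/((j:ℚ)+1)) * altsum (fun l => (x + l)^k) j

lemma altsum_sub (f g : ℕ → ℚ) (p : ℕ) :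
    altsum (fun l => f l - g l) p = altsum f p - altsum g p := by
  unfold altsum
  rw [← Finset.sum_sub_distrib]
  exact Finset.sum_congr rfl fun l _ => by ring

lemma altsum_congr (f g : ℕ → ℚ) (p : ℕ) (h : ∀ l, f l = g l) :
    altsum f p = altsum g p := by
  unfold altsum
  exact Finset.sum_congr rfl fun l _ => by rw [h l]

lemma key_identity (k : ℕ) (x : ℚ) :
    ∑ i ∈ range (k+1), ((k+1).choose i : ℚ) * RHSfun i x = ((k:ℚ)+1) * x^k := by
  -- extend the inner sums to range (k+1)
  have ext : ∀ i ∈ range (k+1), ((k+1).choose i : ℚ) * RHSfun i x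
      = ∑ j ∈ range (k+1), ((k+1).choose i : ℚ) * ((1/((j:ℚ)+1)) * altsum (fun l => (x + l)^i) j) := by
    intro i hi
    rw [RHSfun, Finset.mul_sum]
    apply Finset.sum_subset
    · exact Finset.range_subset_range.mpr (by have := Finset.mem_range.mp hi; omega)
    · intro j _ hj
      have hij : i < j := by
        simp only [Finset.mem_range, not_lt] at hj
        omega
      rw [altsum_pow_eq_zero i j x hij]
      ring
  rw [Finset.sum_congr rfl ext, Finset.sum_comm]
  -- inner sum over i: binomial theorem
  have inner : ∀ j : ℕ, ∑ i ∈ range (k+1), ((k+1).choose i : ℚ) * ((1/((j:ℚ)+1)) * altsum (fun l => (x + l)^i) j)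
      = (1/((j:ℚ)+1)) * (-(altsum (fun l => (x + l)^(k+1)) (j+1))) := by
    intro j
    have lin : ∑ i ∈ range (k+1), ((k+1).choose i : ℚ) * altsum (fun l => (x + l)^i) j
        = altsum (fun l => ∑ i ∈ range (k+1), ((k+1).choose i : ℚ) * (x + l)^i) j := by
      rw [altsum_sum (fun i l => (x + (l:ℚ))^i) (fun i => ((k+1).choose i : ℚ)) j]
    have binom : ∀ l : ℕ, ∑ i ∈ range (k+1), ((k+1).choose i : ℚ) * (x + (l:ℚ))^i
        = ((x + l) + 1)^(k+1) - (x + l)^(k+1) := by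
      intro l
      rw [add_pow (x + (l:ℚ)) 1 (k+1),
        Finset.sum_range_succ (fun i => (x + (l:ℚ))^i * (1:ℚ)^(k+1-i) * ((k+1).choose i : ℚ)) (k+1)]
      simp only [one_pow, mul_one, Nat.choose_self, Nat.cast_one]
      rw [add_sub_cancel_right]
      exact Finset.sum_congr rfl fun i _ => by ring
    have diff : altsum (fun l => ((x + (l:ℚ)) + 1)^(k+1) - (x + l)^(k+1)) j
        = -(altsum (fun l => (x + l)^(k+1)) (j+1)) := by
      rw [altsum_sub, altsum_succ (fun l => (x + (l:ℚ))^(k+1)) j]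
      have : altsum (fun l => (x + ((l:ℕ):ℚ) + 1)^(k+1)) j
          = altsum (fun l => (x + (((l+1):ℕ):ℚ))^(k+1)) j := by
        apply altsum_congr
        intro l
        push_cast
        ring_nf
      rw [this]
      ring
    calc ∑ i ∈ range (k+1), ((k+1).choose i : ℚ) * ((1/((j:ℚ)+1)) * altsum (fun l => (x + l)^i) j)
        = (1/((j:ℚ)+1)) * ∑ i ∈ range (k+1), ((k+1).choose i : ℚ) * altsum (fun l => (x + l)^i) j := by
          rw [Finset.mul_sum]
          exact Finset.sum_congr rfl fun i _ => by ring
      _ = (1/((j:ℚ)+1)) * altsum (fun l => ((x + (l:ℚ)) + 1)^(k+1) - (x + l)^(k+1)) j := by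
          rw [lin]
          congr 1
          exact altsum_congr _ _ _ binom
      _ = (1/((j:ℚ)+1)) * (-(altsum (fun l => (x + l)^(k+1)) (j+1))) := by rw [diff]
  rw [Finset.sum_congr rfl fun j _ => inner j]
  -- expand (x+l)^(k+1) in powers of l
  have expand : ∀ j : ℕ, altsum (fun l => (x + (l:ℚ))^(k+1)) (j+1)
      = ∑ t ∈ range (k+2), (((k+1).choose t : ℚ) * x^(k+1-t)) * altsum (fun l => ((l:ℕ):ℚ)^t) (j+1) := by
    intro j
    rw [← altsum_sum (fun t l => ((l:ℕ):ℚ)^t) (fun t => ((k+1).choose t : ℚ) * x^(k+1-t)) (j+1)]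
    apply altsum_congr
    intro l
    rw [show x + (l:ℚ) = (l:ℚ) + x by ring, add_pow]
    exact Finset.sum_congr rfl fun t _ => by ring
  rw [Finset.sum_congr rfl fun j _ => by rw [expand j]]
  have swap : ∑ j ∈ range (k+1), (1/((j:ℚ)+1)) *
        (-(∑ t ∈ range (k+2), (((k+1).choose t : ℚ) * x^(k+1-t)) * altsum (fun l => ((l:ℕ):ℚ)^t) (j+1)))
      = -(∑ t ∈ range (k+2), (((k+1).choose t : ℚ) * x^(k+1-t)) *
          (∑ j ∈ range (k+1), (1/((j:ℚ)+1)) * altsum (fun l => ((l:ℕ):ℚ)^t) (j+1))) := by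
    have l1 : ∀ j ∈ range (k+1), (1/((j:ℚ)+1)) *
          (-(∑ t ∈ range (k+2), (((k+1).choose t : ℚ) * x^(k+1-t)) * altsum (fun l => ((l:ℕ):ℚ)^t) (j+1)))
        = ∑ t ∈ range (k+2), -((((k+1).choose t : ℚ) * x^(k+1-t)) * ((1/((j:ℚ)+1)) * altsum (fun l => ((l:ℕ):ℚ)^t) (j+1))) := by
      intro j _
      rw [← Finset.sum_neg_distrib, Finset.mul_sum]
      exact Finset.sum_congr rfl fun t _ => by ring
    rw [Finset.sum_congr rfl l1, Finset.sum_comm, ← Finset.sum_neg_distrib]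
    apply Finset.sum_congr rfl
    intro t _
    rw [Finset.mul_sum, ← Finset.sum_neg_distrib]
  rw [swap]
  have scal : ∀ t ∈ range (k+2), (((k+1).choose t : ℚ) * x^(k+1-t)) *
        (∑ j ∈ range (k+1), (1/((j:ℚ)+1)) * altsum (fun l => ((l:ℕ):ℚ)^t) (j+1))
      = (((k+1).choose t : ℚ) * x^(k+1-t)) * (-(if t = 1 then 1 else 0)) := by
    intro t ht
    rw [key_scalar t (k+1) (by have := Finset.mem_range.mp ht; omega)]
  rw [Finset.sum_congr rfl scal]
  have : ∑ t ∈ range (k+2), (((k+1).choose t : ℚ) * x^(k+1-t)) * (-(if t = 1 then 1 else 0))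
      = -(((k+1).choose 1 : ℚ) * x^k) := by
    rw [Finset.sum_eq_single 1]
    · simp
    · intro t _ ht; simp [ht]
    · intro h; exact absurd (Finset.mem_range.mpr (by omega)) h
  rw [this]
  simp

lemma bernoulli_eval_eq_RHSfun : ∀ k : ℕ, ∀ x : ℚ, (Polynomial.bernoulli k).eval x = RHSfun k x := by
  intro k
  induction k using Nat.strong_induction_on with
  | _ k ih =>
    intro x
    have hsum := Polynomial.sum_bernoulli k
    have heval : ∑ i ∈ range (k+1), ((k+1).choose i : ℚ) * (Polynomial.bernoulli i).eval x
        = ((k:ℚ)+1) * x^k := by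
      have h := congrArg (Polynomial.eval x) hsum
      rw [Polynomial.eval_finset_sum, Polynomial.eval_monomial] at h
      simp only [Polynomial.eval_smul, smul_eq_mul] at h
      refine h.trans ?_
      push_cast
      ring
    have h1 : ∑ i ∈ range (k+1), ((k+1).choose i : ℚ) * (Polynomial.bernoulli i).eval x
        = ∑ i ∈ range (k+1), ((k+1).choose i : ℚ) * RHSfun i x :=
      heval.trans (key_identity k x).symm
    rw [Finset.sum_range_succ, Finset.sum_range_succ] at h1
    have h2 : ∑ i ∈ range k, ((k+1).choose i : ℚ) * (Polynomial.bernoulli i).eval x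
        = ∑ i ∈ range k, ((k+1).choose i : ℚ) * RHSfun i x :=
      Finset.sum_congr rfl fun i hi => by rw [ih i (Finset.mem_range.mp hi) x]
    rw [h2] at h1
    have h3 : ((k+1).choose k : ℚ) * (Polynomial.bernoulli k).eval x
        = ((k+1).choose k : ℚ) * RHSfun k x := by linarith
    have hc : ((k+1).choose k : ℚ) ≠ 0 := by
      have : (k+1).choose k = k + 1 := Nat.choose_succ_self_right k
      rw [this]
      positivity
    exact mul_left_cancel₀ hc h3


end BernoulliRStirlingProof

open Finset in
/-- `B_k(r) = Σ_{j=0}^{k} (-1)^j (j!/(j+1)) S_{2,r}(k+r, j+r)`. -/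
theorem bernoulli_poly_eval_nat_eq_rStirling (r k : ℕ) :
    (Polynomial.bernoulli k).eval (r : ℚ) =
      ∑ j ∈ Finset.range (k + 1),
        (-1 : ℚ) ^ j * ((Nat.factorial j : ℚ) / (j + 1)) * rStirlingSecond r k j := by

  rw [bernoulli_eval_eq_RHSfun k (r:ℚ), RHSfun]
  refine Finset.sum_congr rfl fun j _ => ?_
  have hfac : (j.factorial : ℚ) ≠ 0 := Nat.cast_ne_zero.mpr j.factorial_ne_zero
  have hj1 : ((j:ℚ)+1) ≠ 0 := by positivity
  rw [rStirlingSecond]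
  have hA : altsum (fun l => ((r:ℚ) + l)^k) j
      = (-1:ℚ)^j * ∑ i ∈ range (j+1), (-1:ℚ)^(j-i) * (j.choose i : ℚ) * ((i:ℚ) + r)^k := by
    rw [Finset.mul_sum]
    unfold altsum
    refine Finset.sum_congr rfl fun i hi => ?_
    have hij : i ≤ j := Nat.lt_succ_iff.mp (Finset.mem_range.mp hi)
    have hsign : (-1:ℚ)^j * (-1:ℚ)^(j-i) = (-1:ℚ)^i := by
      rw [← pow_add, show j + (j - i) = 2*(j-i) + i by omega, pow_add, pow_mul]
      simp
    calc (-1:ℚ)^i * (j.choose i : ℚ) * ((r:ℚ) + i)^k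
        = ((-1:ℚ)^j * (-1:ℚ)^(j-i)) * (j.choose i : ℚ) * ((i:ℚ) + r)^k := by rw [hsign]; ring
      _ = (-1:ℚ)^j * ((-1:ℚ)^(j-i) * (j.choose i : ℚ) * ((i:ℚ) + r)^k) := by ring
  rw [hA]
  field_simp
end

section
/- For all integers m ≥ 1, r ≥ 0, k ≥ 0, and n ≥ 1, the power sum S_k^{m,r}(n) = Σ_{ℓ=0}^{n-1} (ℓm + r)^k satisfies S_k^{m,r}(n) = Σ_{j=0}^{k} A_{m,r}(k, k−j) · C(n+j, k+1), where A_{m,r}(k,j) = Σ_{i=0}^{j} (-1)^i · C(k+1, i) · (m(j−i) + r)^k and C(a,b) denotes the ordinary binomial coefficient. -/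
open Finset Polynomial

noncomputable def bp (k : ℕ) : Polynomial ℚ :=
  Polynomial.C ((k.factorial : ℚ)⁻¹) * descPochhammer ℚ k

lemma bp_eval (k n : ℕ) : (bp k).eval (n : ℚ) = (n.choose k : ℚ) := by
  have h := descPochhammer_eval_eq_descFactorial ℚ n k
  have h2 : n.descFactorial k = k.factorial * n.choose k :=
    Nat.descFactorial_eq_factorial_mul_choose n k
  have hk : (k.factorial : ℚ) ≠ 0 := by exact_mod_cast k.factorial_ne_zero
  rw [bp, eval_mul, eval_C, h, h2, Nat.cast_mul, ← mul_assoc, inv_mul_cancel₀ hk, one_mul]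

lemma bp_natDegree (k : ℕ) : (bp k).natDegree = k := by
  have hk : ((k.factorial : ℚ)⁻¹) ≠ 0 := by
    simp [Nat.factorial_ne_zero]
  rw [bp, natDegree_C_mul hk, descPochhammer_natDegree]

lemma alt_vanish : ∀ (k : ℕ) (p : Polynomial ℚ), p.natDegree ≤ k → ∀ x : ℚ,
    ∑ i ∈ range (k + 2), (-1 : ℚ) ^ i * ((k+1).choose i : ℚ) * p.eval (x - i) = 0 := by
  intro k
  induction k with
  | zero =>
    intro p hp x
    rw [Polynomial.eq_C_of_natDegree_le_zero hp]
    simp [Finset.sum_range_succ]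
  | succ k ih =>
    intro p hp x
    set q : Polynomial ℚ := p - p.comp (X - Polynomial.C 1) with hq
    have hq_eval : ∀ y : ℚ, q.eval y = p.eval y - p.eval (y - 1) := by
      intro y; simp [hq, eval_comp]
    have hq_deg : q.natDegree ≤ k := by
      by_cases hp0 : p.natDegree = 0
      · have hq0 : q = 0 := by
          rw [hq, Polynomial.eq_C_of_natDegree_le_zero (le_of_eq hp0)]
          simp
        simp [hq0]
      · have hXC : (X - Polynomial.C (1:ℚ)).natDegree = 1 := natDegree_X_sub_C 1
        have hcompdeg : (p.comp (X - Polynomial.C 1)).natDegree = p.natDegree := by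
          rw [natDegree_comp, hXC, mul_one]
        have hpne : p ≠ 0 := fun h => hp0 (by simp [h])
        have hlc : (p.comp (X - Polynomial.C 1)).leadingCoeff = p.leadingCoeff := by
          rw [leadingCoeff_comp (by rw [hXC]; exact one_ne_zero),
            (monic_X_sub_C (1:ℚ)).leadingCoeff, one_pow, mul_one]
        have hdeg : (p.comp (X - Polynomial.C 1)).degree = p.degree := by
          have hcne : p.comp (X - Polynomial.C 1) ≠ 0 := by
            intro h
            apply hp0
            rw [← hcompdeg, h, natDegree_zero]
          rw [degree_eq_natDegree hpne, degree_eq_natDegree hcne, hcompdeg]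
        have hlt : q.degree < p.degree := degree_sub_lt hdeg.symm hpne hlc.symm
        by_cases hq0 : q = 0
        · simp [hq0]
        · have := natDegree_lt_natDegree hq0 hlt
          omega
    have key : ∑ i ∈ range (k + 3), (-1 : ℚ) ^ i * ((k+2).choose i : ℚ) * p.eval (x - i)
        = ∑ i ∈ range (k + 2), (-1 : ℚ) ^ i * ((k+1).choose i : ℚ) * q.eval (x - i) := by
      have H : ∀ i ∈ range (k+2),
          (-1 : ℚ) ^ (i+1) * ((k+2).choose (i+1) : ℚ) * p.eval (x - ((i+1 : ℕ) : ℚ))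
          = -((-1 : ℚ) ^ i * ((k+1).choose i : ℚ) * p.eval (x - i - 1))
            + (-1 : ℚ) ^ (i+1) * ((k+1).choose (i+1) : ℚ) * p.eval (x - ((i+1 : ℕ) : ℚ)) := by
        intro i _
        have hc : x - ((i+1 : ℕ) : ℚ) = x - i - 1 := by push_cast; ring
        rw [Nat.choose_succ_succ (k+1) i, hc]
        push_cast
        ring
      calc ∑ i ∈ range (k + 3), (-1 : ℚ) ^ i * ((k+2).choose i : ℚ) * p.eval (x - i)
          = (∑ i ∈ range (k+2), (-1 : ℚ) ^ (i+1) * ((k+2).choose (i+1) : ℚ)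
              * p.eval (x - ((i+1 : ℕ) : ℚ)))
            + (-1 : ℚ) ^ 0 * ((k+2).choose 0 : ℚ) * p.eval (x - ((0 : ℕ) : ℚ)) := by
            exact Finset.sum_range_succ'
              (fun i => (-1 : ℚ) ^ i * ((k+2).choose i : ℚ) * p.eval (x - i)) (k+2)
        _ = (∑ i ∈ range (k+2), (-((-1 : ℚ) ^ i * ((k+1).choose i : ℚ) * p.eval (x - i - 1))
              + (-1 : ℚ) ^ (i+1) * ((k+1).choose (i+1) : ℚ) * p.eval (x - ((i+1 : ℕ) : ℚ))))
            + (-1 : ℚ) ^ 0 * ((k+1).choose 0 : ℚ) * p.eval (x - ((0 : ℕ) : ℚ)) := by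
            rw [Finset.sum_congr rfl H]; norm_num
        _ = (∑ i ∈ range (k+2), -((-1 : ℚ) ^ i * ((k+1).choose i : ℚ) * p.eval (x - i - 1)))
            + ((∑ i ∈ range (k+2), (-1 : ℚ) ^ (i+1) * ((k+1).choose (i+1) : ℚ)
                * p.eval (x - ((i+1 : ℕ) : ℚ)))
              + (-1 : ℚ) ^ 0 * ((k+1).choose 0 : ℚ) * p.eval (x - ((0 : ℕ) : ℚ))) := by
            rw [Finset.sum_add_distrib]; ring
        _ = (∑ i ∈ range (k+2), -((-1 : ℚ) ^ i * ((k+1).choose i : ℚ) * p.eval (x - i - 1)))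
            + ∑ i ∈ range (k+3), (-1 : ℚ) ^ i * ((k+1).choose i : ℚ) * p.eval (x - i) := by
            rw [← Finset.sum_range_succ'
              (fun i => (-1 : ℚ) ^ i * ((k+1).choose i : ℚ) * p.eval (x - i)) (k+2)]
        _ = (∑ i ∈ range (k+2), -((-1 : ℚ) ^ i * ((k+1).choose i : ℚ) * p.eval (x - i - 1)))
            + ∑ i ∈ range (k+2), (-1 : ℚ) ^ i * ((k+1).choose i : ℚ) * p.eval (x - i) := by
            rw [Finset.sum_range_succ
              (fun i => (-1 : ℚ) ^ i * ((k+1).choose i : ℚ) * p.eval (x - i)) (k+2)]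
            have hz : (-1 : ℚ) ^ (k+2) * (((k+1).choose (k+2) : ℕ) : ℚ)
                * p.eval (x - ((k+2 : ℕ) : ℚ)) = 0 := by
              rw [Nat.choose_eq_zero_of_lt (by omega)]
              simp
            rw [hz, add_zero]
        _ = ∑ i ∈ range (k + 2), (-1 : ℚ) ^ i * ((k+1).choose i : ℚ) * q.eval (x - i) := by
            rw [← Finset.sum_add_distrib]
            apply Finset.sum_congr rfl
            intro i _
            rw [hq_eval]
            ring
    rw [show k + 1 + 2 = k + 3 from rfl, show k + 1 + 1 = k + 2 from rfl, key, ih q hq_deg x]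

/-- `A_{m,r}(k,j) = Σ_{i=0}^{j} (-1)^i C(k+1,i) (m(j-i) + r)^k`. -/
def eulerianA (m r k j : ℕ) : ℚ :=
  ∑ i ∈ Finset.range (j + 1),
    (-1 : ℚ) ^ i * (Nat.choose (k + 1) i : ℚ) * ((m : ℚ) * ((j - i : ℕ) : ℚ) + r) ^ k

lemma Edelta (k t ℓ : ℕ) (ht : t ≤ k) (hl : ℓ ≤ k) :
    ∑ u ∈ range (k - t + 1),
      (-1:ℚ)^u * ((k+1).choose u : ℚ) * ((ℓ + (k - t) - u).choose k : ℚ)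
    = if t = ℓ then 1 else 0 := by
  rcases lt_trichotomy ℓ t with h | h | h
  · rw [if_neg (by omega)]
    apply Finset.sum_eq_zero
    intro u hu
    rw [Nat.choose_eq_zero_of_lt (show ℓ + (k - t) - u < k by omega)]
    simp
  · rw [if_pos h.symm]
    rw [Finset.sum_eq_single_of_mem 0 (by simp)]
    · have : ℓ + (k - t) - 0 = k := by omega
      rw [this]
      simp
    · intro u hu hu0
      simp only [mem_range] at hu
      rw [Nat.choose_eq_zero_of_lt (show ℓ + (k - t) - u < k by omega)]
      simp
  · rw [if_neg (by omega)]
    have hext : ∑ u ∈ range (k - t + 1),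
        (-1:ℚ)^u * ((k+1).choose u : ℚ) * ((ℓ + (k - t) - u).choose k : ℚ)
        = ∑ u ∈ range (k + 2),
        (-1:ℚ)^u * ((k+1).choose u : ℚ) * ((ℓ + (k - t) - u).choose k : ℚ) := by
      apply Finset.sum_subset
      · intro u hu; simp only [mem_range] at *; omega
      · intro u hu hu'
        simp only [mem_range] at hu hu'
        rw [Nat.choose_eq_zero_of_lt (show ℓ + (k - t) - u < k by omega)]
        simp
    rw [hext, ← alt_vanish k (bp k) (le_of_eq (bp_natDegree k)) ((ℓ + (k - t) : ℕ) : ℚ)]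
    apply Finset.sum_congr rfl
    intro u hu
    simp only [mem_range] at hu
    have hcast : ((ℓ + (k - t) : ℕ) : ℚ) - (u : ℚ) = (((ℓ + (k - t) - u : ℕ)) : ℚ) := by
      have : u ≤ ℓ + (k - t) := by omega
      push_cast [Nat.cast_sub this]
      ring
    rw [hcast, bp_eval]

lemma key (m r k ℓ : ℕ) :
    ∑ j ∈ range (k+1), eulerianA m r k (k - j) * ((ℓ + j).choose k : ℚ)
      = ((ℓ:ℚ) * m + r)^k := by
  induction ℓ using Nat.strong_induction_on with
  | _ ℓ IH =>
  by_cases hlk : ℓ ≤ k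
  · -- base case
    have refl1 : ∑ j ∈ range (k+1), eulerianA m r k (k - j) * ((ℓ + j).choose k : ℚ)
        = ∑ s ∈ range (k+1), eulerianA m r k s * ((ℓ + (k - s)).choose k : ℚ) := by
      rw [← Finset.sum_range_reflect
        (fun s => eulerianA m r k s * ((ℓ + (k - s)).choose k : ℚ)) (k+1)]
      apply Finset.sum_congr rfl
      intro j hj
      simp only [mem_range] at hj
      have h1 : k + 1 - 1 - j = k - j := by omega
      have h2 : k - (k - j) = j := by omega
      rw [h1, h2]
    rw [refl1]
    have expandA : ∀ s ∈ range (k+1),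
        eulerianA m r k s * ((ℓ + (k - s)).choose k : ℚ)
        = ∑ t ∈ range (s+1),
            (-1:ℚ)^(s-t) * ((k+1).choose (s-t) : ℚ) * ((m:ℚ) * t + r)^k
              * ((ℓ + (k - s)).choose k : ℚ) := by
      intro s _
      rw [eulerianA, ← Finset.sum_mul]
      congr 1
      rw [← Finset.sum_range_reflect
        (fun t => (-1:ℚ)^(s-t) * ((k+1).choose (s-t) : ℚ) * ((m:ℚ) * t + r)^k) (s+1)]
      apply Finset.sum_congr rfl
      intro i hi
      simp only [mem_range] at hi
      have h1 : s + 1 - 1 - i = s - i := by omega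
      have h2 : s - (s - i) = i := by omega
      rw [h1, h2]
    rw [Finset.sum_congr rfl expandA]
    rw [Finset.sum_comm' (s' := fun t => Finset.Ico t (k+1)) (t' := range (k+1))
      (by intro s t; simp only [mem_range, mem_Ico]; omega)]
    have inner : ∀ t ∈ range (k+1),
        ∑ s ∈ Finset.Ico t (k+1),
          (-1:ℚ)^(s-t) * ((k+1).choose (s-t) : ℚ) * ((m:ℚ) * t + r)^k
            * ((ℓ + (k - s)).choose k : ℚ)
        = ((m:ℚ) * t + r)^k * (if t = ℓ then 1 else 0) := by
      intro t htr
      simp only [mem_range] at htr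
      rw [Finset.sum_Ico_eq_sum_range]
      have hrange : k + 1 - t = k - t + 1 := by omega
      rw [hrange]
      rw [← Edelta k t ℓ (by omega) hlk, Finset.mul_sum]
      apply Finset.sum_congr rfl
      intro u hu
      simp only [mem_range] at hu
      have h1 : t + u - t = u := by omega
      have h2 : k - (t + u) = ℓ + (k - t) - u - ℓ := by omega
      have h2' : ℓ + (k - (t + u)) = ℓ + (k - t) - u := by omega
      rw [h1, h2']
      ring
    rw [Finset.sum_congr rfl inner]
    rw [Finset.sum_eq_single_of_mem ℓ (by simp only [mem_range]; omega)
      (fun t _ ht => by rw [if_neg ht, mul_zero]), if_pos rfl, mul_one]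
    ring
  · push_neg at hlk
    set D : Polynomial ℚ :=
      (∑ j ∈ range (k+1),
        Polynomial.C (eulerianA m r k (k - j)) * (bp k).comp (X + Polynomial.C (j:ℚ)))
        - (Polynomial.C (m:ℚ) * X + Polynomial.C (r:ℚ))^k with hD
    have hDdeg : D.natDegree ≤ k := by
      apply le_trans (natDegree_sub_le _ _)
      apply max_le
      · apply natDegree_sum_le_of_forall_le
        intro j _
        apply le_trans (natDegree_C_mul_le _ _)
        rw [natDegree_comp, bp_natDegree, natDegree_X_add_C, mul_one]
      · have h1 : (Polynomial.C (m:ℚ) * X + Polynomial.C (r:ℚ)).natDegree ≤ 1 := by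
          apply le_trans (natDegree_add_le _ _)
          apply max_le
          · exact le_trans (natDegree_C_mul_le _ _) (le_of_eq natDegree_X)
          · simp
        calc ((Polynomial.C (m:ℚ) * X + Polynomial.C (r:ℚ))^k).natDegree
            ≤ k * (Polynomial.C (m:ℚ) * X + Polynomial.C (r:ℚ)).natDegree := natDegree_pow_le
          _ ≤ k * 1 := Nat.mul_le_mul_left k h1
          _ = k := mul_one k
    have hDeval : ∀ t : ℕ, D.eval (t:ℚ)
        = (∑ j ∈ range (k+1), eulerianA m r k (k - j) * ((t + j).choose k : ℚ))
          - ((t:ℚ) * m + r)^k := by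
      intro t
      rw [hD]
      simp only [eval_sub, eval_finset_sum, eval_mul, eval_add, eval_pow, eval_C, eval_X,
        eval_comp]
      congr 1
      · apply Finset.sum_congr rfl
        intro j _
        have hc : ((t:ℚ) + (j:ℚ)) = ((t + j : ℕ) : ℚ) := by push_cast; ring
        rw [hc, bp_eval]
      · ring
    have hvan := alt_vanish k D hDdeg (ℓ:ℚ)
    rw [Finset.sum_range_succ'
      (fun i => (-1:ℚ)^i * ((k+1).choose i : ℚ) * D.eval ((ℓ:ℚ) - i)) (k+1)] at hvan
    have hz : ∀ i ∈ range (k+1),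
        (-1:ℚ)^(i+1) * ((k+1).choose (i+1) : ℚ) * D.eval ((ℓ:ℚ) - ((i+1 : ℕ):ℚ)) = 0 := by
      intro i hi
      simp only [mem_range] at hi
      have hc : (ℓ:ℚ) - ((i+1 : ℕ):ℚ) = ((ℓ - (i+1) : ℕ) : ℚ) := by
        push_cast [Nat.cast_sub (show i+1 ≤ ℓ by omega)]
        ring
      rw [hc, hDeval, IH (ℓ - (i+1)) (by omega), sub_self, mul_zero]
    rw [Finset.sum_eq_zero hz, zero_add] at hvan
    simp only [pow_zero, Nat.choose_zero_right, Nat.cast_one, one_mul, Nat.cast_zero,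
      sub_zero] at hvan
    rw [hDeval ℓ] at hvan
    linarith [hvan]


lemma hockey (k j : ℕ) (hj : j ≤ k) :
    ∀ n : ℕ, (n + j).choose (k+1) = ∑ ℓ ∈ range n, (ℓ + j).choose k := by
  intro n
  induction n with
  | zero => simp [Nat.choose_eq_zero_of_lt (show j < k + 1 by omega)]
  | succ n ih =>
    rw [Finset.sum_range_succ, ← ih, show n + 1 + j = (n + j) + 1 by omega,
      Nat.choose_succ_succ (n + j) k, Nat.add_comm]

/-- `S_k^{m,r}(n) = Σ_{j=0}^{k} A_{m,r}(k, k-j) C(n+j, k+1)`. -/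
theorem power_sum_eq_eulerian_binomial (m r k n : ℕ) (hm : 1 ≤ m) (hn : 1 ≤ n) :
    ∑ ℓ ∈ Finset.range n, ((ℓ : ℚ) * m + r) ^ k =
      ∑ j ∈ Finset.range (k + 1),
        eulerianA m r k (k - j) * (Nat.choose (n + j) (k + 1) : ℚ) := by
  have step1 : ∀ j ∈ range (k+1),
      eulerianA m r k (k - j) * ((n + j).choose (k + 1) : ℚ)
      = ∑ ℓ ∈ range n, eulerianA m r k (k - j) * ((ℓ + j).choose k : ℚ) := by
    intro j hj
    simp only [mem_range] at hj
    rw [hockey k j (by omega) n]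
    push_cast [Finset.mul_sum]
    rfl
  rw [Finset.sum_congr rfl step1, Finset.sum_comm]
  apply Finset.sum_congr rfl
  intro ℓ _
  exact (key m r k ℓ).symm
end
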